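/- arXiv:1305.4238 — 3 statements merged into one kernel-verified Lean document; each statement's English description precedes it below -/
import Mathlib

section
/- Let R be a one-dimensional Cohen–Macaulay local ring admitting a canonical module K_R, let F = Q(R) be its total ring of fractions, and let I be a fractional ideal of R with FI = F. Set I^∨ = Hom_R(I, K_R) and let t : I ⊗_R I^∨ → K_R be the R-linear map with t(x ⊗ f) = f(x). Then the R-module I ⊗_R I^∨ is torsionfree if and only if the map t is injective. -/
open CategoryTheory TensorProduct

noncomputable section

/-- Minimal number of generators of a submodule. -/
def minGen (R : Type*) {M : Type*} [Semiring R] [AddCommMonoid M] [Module R M]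
    (p : Submodule R M) : ℕ :=
  sInf {n | ∃ s : Finset M, s.card = n ∧ Submodule.span R (s : Set M) = p}

/-- Length of a module, as the height of `⊤` in its lattice of submodules. -/
def moduleLength (R M : Type*) [Ring R] [AddCommGroup M] [Module R M] : ℕ∞ :=
  Order.height (⊤ : Submodule R M)

/-- The `i`-th Ext module `Ext_R^i(M, N)`. -/
def extMod (R : Type u) [CommRing R] (M N : ModuleCat.{u} R) (i : ℕ) : ModuleCat R :=
  ((Ext R (ModuleCat.{u} R) i).obj (Opposite.op M)).obj N

/-- `K` is a canonical module of the one-dimensional Cohen–Macaulay local ring `R` with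
maximal ideal `m`, via the Bass-number characterization:
`Ext^i(R/m, K) = 0` for `i ≠ 1` and `Ext^1(R/m, K) ≅ R/m`. -/
def IsCanonicalModuleAt (R : Type u) [CommRing R] (m : Ideal R)
    (K : Type u) [AddCommGroup K] [Module R K] : Prop :=
  Module.Finite R K ∧
  (∀ i : ℕ, i ≠ 1 →
    Subsingleton (extMod R (ModuleCat.of R (R ⧸ m)) (ModuleCat.of R K) i)) ∧
  Nonempty ((extMod R (ModuleCat.of R (R ⧸ m)) (ModuleCat.of R K) 1) ≅
    ModuleCat.of R (R ⧸ m))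

/-- The evaluation map `I ⊗_R Hom_R(I, K) → K`, `x ⊗ f ↦ f x`. -/
def evalMap (R : Type*) [CommRing R] {M : Type*} [AddCommGroup M] [Module R M]
    (I : Submodule R M) (K : Type*) [AddCommGroup K] [Module R K] :
    (I ⊗[R] (I →ₗ[R] K)) →ₗ[R] K :=
  TensorProduct.lift LinearMap.applyₗ

/-- A fractional ideal `I` of `R` with `FI = F`: a finitely generated `R`-submodule of the
total ring of fractions `F = Q(R)` containing a unit of `F`. -/
def IsFracIdealUnit (R : Type*) [CommRing R] (I : Submodule R (FractionRing R)) : Prop :=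
  I.FG ∧ ∃ x ∈ I, IsUnit x

/-- A one-dimensional Cohen–Macaulay local ring: Noetherian, local, Krull dimension one,
and the maximal ideal contains a nonzerodivisor. -/
def IsOneDimCMLocal (R : Type*) [CommRing R] [IsLocalRing R] : Prop :=
  IsNoetherianRing R ∧ ringKrullDim R = 1 ∧
    ∃ x ∈ IsLocalRing.maximalIdeal R, x ∈ nonZeroDivisors R


section Aux
universe u

variable {R : Type u} [CommRing R]

/-- common denominator for two elements of the total fraction ring -/
lemma pair_denom (a b : FractionRing R) :
    ∃ s ∈ nonZeroDivisors R, ∃ α β : R,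
      algebraMap R (FractionRing R) α = algebraMap R (FractionRing R) s * a ∧
      algebraMap R (FractionRing R) β = algebraMap R (FractionRing R) s * b := by
  obtain ⟨s₁, α₁, hα₁⟩ := IsLocalization.exists_integer_multiple (nonZeroDivisors R) a
  obtain ⟨s₂, α₂, hα₂⟩ := IsLocalization.exists_integer_multiple (nonZeroDivisors R) b
  refine ⟨s₁ * s₂, mul_mem s₁.2 s₂.2, s₂ * α₁, s₁ * α₂, ?_, ?_⟩
  · rw [map_mul, map_mul, hα₁, Algebra.smul_def, mul_left_comm, mul_assoc]
  · rw [map_mul, map_mul, hα₂, Algebra.smul_def]; ring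

local notation "F'" => FractionRing R

/-- For `a` in `I` and a unit `u ∈ I`, there are `μ ∈ R⁰` and `α : R`
with `μ • a = α • u`. -/
lemma cross_rel (I : Submodule R F') {u : F'} (huI : u ∈ I) (hu : IsUnit u)
    (a : I) : ∃ μ ∈ nonZeroDivisors R, ∃ α : R,
      μ • a = α • (⟨u, huI⟩ : I) := by
  obtain ⟨s, hs, α, μ, hα, hμ⟩ := pair_denom (a : F') u
  have hsu : IsUnit (algebraMap R F' s) :=
    IsLocalization.map_units F' (⟨s, hs⟩ : nonZeroDivisors R)
  have hμu : IsUnit (algebraMap R F' μ) := by rw [hμ]; exact hsu.mul hu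
  have hμnzd : μ ∈ nonZeroDivisors R := by
    rw [mem_nonZeroDivisors_iff_right]; intro x hx
    have : algebraMap R F' x * algebraMap R F' μ = 0 := by rw [← map_mul, hx, map_zero]
    have hx0 : algebraMap R F' x = 0 := by
      rcases hμu with ⟨v, hv⟩
      calc algebraMap R F' x = algebraMap R F' x * algebraMap R F' μ * (v⁻¹ : F'ˣ) := by
            rw [← hv, mul_assoc, Units.mul_inv, mul_one]
        _ = 0 := by rw [this, zero_mul]
    exact IsFractionRing.injective R F' (by rw [hx0, map_zero])
  refine ⟨μ, hμnzd, α, Subtype.ext ?_⟩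
  show μ • (a : F') = α • u
  rw [Algebra.smul_def, Algebra.smul_def, hμ, hα]
  ring

lemma kill_range {M N : Type*} [AddCommGroup M] [Module R M] [Module.Finite R M]
    [AddCommGroup N] [Module R N] (g : M →ₗ[R] N)
    (h : ∀ x : M, g x ∈ Submodule.torsion R N) :
    ∃ r ∈ nonZeroDivisors R, ∀ x : M, r • g x = 0 := by
  obtain ⟨T, hT⟩ := Module.Finite.fg_top (R := R) (M := M)
  have hc : ∀ y : T, ∃ a : nonZeroDivisors R, (a : R) • g (y : M) = 0 := by
    intro y
    obtain ⟨a, ha⟩ := h (y : M)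
    exact ⟨a, ha⟩
  classical
  choose ν hν using hc
  set r : nonZeroDivisors R := ∏ y ∈ T.attach, ν y with hr
  refine ⟨(r : R), r.2, fun x => ?_⟩
  have hx : x ∈ (⊤ : Submodule R M) := trivial
  rw [← hT] at hx
  have : (⊤ : Submodule R M) ≤ LinearMap.ker ((r : R) • g) := by
    rw [← hT, Submodule.span_le]
    intro y hy
    have h1 : (r : R) = (ν ⟨y, hy⟩ : R) * ∏ z ∈ T.attach.erase ⟨y, hy⟩, (ν z : R) := by
      rw [hr, ← Finset.mul_prod_erase T.attach ν (Finset.mem_attach T ⟨y, hy⟩)]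
      push_cast [Submonoid.coe_finset_prod]
      rfl
    simp only [SetLike.mem_coe, LinearMap.mem_ker, LinearMap.smul_apply]
    rw [h1, mul_comm, mul_smul, hν ⟨y, hy⟩, smul_zero]
  have := this trivial (x := x)
  simpa using this

set_option synthInstance.maxHeartbeats 1000000 in
lemma ker_eval_le_torsion (K : Type u) [AddCommGroup K] [Module R K]
    (I : Submodule R F') (hFG : I.FG) {u : F'} (huI : u ∈ I) (hu : IsUnit u)
    (x : I ⊗[R] (I →ₗ[R] K)) (hx : evalMap R I K x = 0) :
    x ∈ Submodule.torsion R (I ⊗[R] (I →ₗ[R] K)) := by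
  set U : I := ⟨u, huI⟩ with hU
  -- Step 1: every element can be moved to a pure tensor `U ⊗ g` by a nonzerodivisor.
  have key : ∀ y : I ⊗[R] (I →ₗ[R] K), ∃ μ ∈ nonZeroDivisors R, ∃ g : I →ₗ[R] K,
      μ • y = U ⊗ₜ[R] g := by
    intro y
    induction y with
    | zero => exact ⟨1, one_mem _, 0, by simp⟩
    | tmul a f =>
      obtain ⟨μ, hμ, α, hrel⟩ := cross_rel I huI hu a
      refine ⟨μ, hμ, α • f, ?_⟩
      rw [TensorProduct.smul_tmul', hrel, TensorProduct.smul_tmul]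
    | add y z hy hz =>
      obtain ⟨μ₁, hμ₁, g₁, h₁⟩ := hy
      obtain ⟨μ₂, hμ₂, g₂, h₂⟩ := hz
      refine ⟨μ₁ * μ₂, mul_mem hμ₁ hμ₂, μ₂ • g₁ + μ₁ • g₂, ?_⟩
      rw [smul_add, TensorProduct.tmul_add, TensorProduct.tmul_smul,
        TensorProduct.tmul_smul, ← h₁, ← h₂, ← mul_smul, ← mul_smul, mul_comm μ₂ μ₁]
  obtain ⟨μ, hμ, g, hg⟩ := key x
  -- Step 2: `g U = 0`.
  have hgU : g U = 0 := by
    have h1 : evalMap R I K (μ • x) = 0 := by rw [map_smul, hx, smul_zero]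
    rw [hg] at h1
    simpa [evalMap] using h1
  -- Step 3: `g` has torsion values.
  have htor : ∀ a : I, g a ∈ Submodule.torsion R K := by
    intro a
    obtain ⟨ν, hν, α, hrel⟩ := cross_rel I huI hu a
    refine ⟨⟨ν, hν⟩, ?_⟩
    show ν • g a = 0
    rw [← map_smul, hrel, map_smul, hgU, smul_zero]
  -- Step 4: kill the range of `g` by a single nonzerodivisor.
  haveI : Module.Finite R I := Module.Finite.iff_fg.mpr hFG
  obtain ⟨r, hr, hrg⟩ := kill_range g htor
  refine ⟨⟨r * μ, mul_mem hr hμ⟩, ?_⟩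
  show (r * μ) • x = 0
  have hrg0 : r • g = 0 := by ext a; simpa using hrg a
  rw [mul_smul, hg, ← TensorProduct.tmul_smul, hrg0, TensorProduct.tmul_zero]

lemma minimal_prime_zerodivisor {p : Ideal R} (hp : p ∈ minimalPrimes R) {r : R}
    (hr : r ∈ nonZeroDivisors R) (hrp : r ∈ p) : False := by
  haveI hpp : p.IsPrime := hp.1.1
  set L := Localization p.primeCompl
  have h1 : algebraMap R L r ∈ IsLocalRing.maximalIdeal L :=
    (IsLocalization.AtPrime.to_map_mem_maximal_iff L p r).mpr hrp
  have h2 : IsNilpotent (algebraMap R L r) :=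
    (by haveI := Ring.KrullDimLE.of_isLocalization p hp L; exact Ring.KrullDimLE.isNilpotent_iff_mem_maximalIdeal.mpr h1)
  obtain ⟨n, hn⟩ := h2
  rw [← map_pow, IsLocalization.map_eq_zero_iff p.primeCompl] at hn
  obtain ⟨m, hm⟩ := hn
  have hm0 : (m : R) = 0 := (mem_nonZeroDivisors_iff_right.mp (pow_mem hr n)) _ hm
  exact m.2 (hm0 ▸ p.zero_mem)

open IsLocalRing in
lemma torsion_K_eq_bot [IsLocalRing R] (hNoeth : IsNoetherianRing R)
    (hdim : ringKrullDim R = 1)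
    (K : Type u) [AddCommGroup K] [Module R K]
    (hsub : Subsingleton ((R ⧸ maximalIdeal R) →ₗ[R] K)) :
    Submodule.torsion R K = ⊥ := by
  haveI := hNoeth
  by_contra hne
  obtain ⟨y, hyT, hy0⟩ := Submodule.exists_mem_ne_zero_of_ne_bot hne
  obtain ⟨P, hP, hle⟩ := exists_le_isAssociatedPrime_of_isNoetherianRing R y hy0
  obtain ⟨hPprime, z, hz⟩ := isAssociatedPrime_iff.mp hP
  obtain ⟨rr, hrr⟩ := hyT
  have hrP : (rr : R) ∈ P :=
    hle (Submodule.mem_colon_singleton.mpr ((Submodule.mem_bot R).mpr hrr))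
  have hPm : P = maximalIdeal R := by
    by_contra hne2
    have hPle : P ≤ maximalIdeal R := le_maximalIdeal hPprime.ne_top
    obtain ⟨q, hq, hqP⟩ := Ideal.exists_minimalPrimes_le (bot_le : (⊥ : Ideal R) ≤ P)
    haveI hqprime : q.IsPrime := hq.1.1
    have hqmin : q ∈ minimalPrimes R := hq
    have hqneP : q ≠ P := by
      rintro rfl
      exact minimal_prime_zerodivisor hqmin rr.2 hrP
    let x0 : PrimeSpectrum R := ⟨q, hqprime⟩
    let x1 : PrimeSpectrum R := ⟨P, hPprime⟩
    let x2 : PrimeSpectrum R := ⟨maximalIdeal R, (maximalIdeal.isMaximal R).isPrime⟩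
    have h01 : x0 < x1 :=
      lt_of_le_of_ne (show x0 ≤ x1 from hqP)
        (fun h => hqneP (congrArg PrimeSpectrum.asIdeal h))
    have h12 : x1 < x2 :=
      lt_of_le_of_ne (show x1 ≤ x2 from hPle)
        (fun h => hne2 (congrArg PrimeSpectrum.asIdeal h))
    have hchain := Order.LTSeries.length_le_krullDim
      (((RelSeries.singleton {(a, b) : PrimeSpectrum R × PrimeSpectrum R | a < b} x0).snoc x1 h01).snoc x2 h12)
    rw [show Order.krullDim (PrimeSpectrum R) = ringKrullDim R from rfl, hdim] at hchain
    simp only [RelSeries.snoc_length, RelSeries.singleton_length] at hchain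
    change ((2 : ℕ) : WithBot ℕ∞) ≤ 1 at hchain; norm_num at hchain
  have hz0 : z ≠ 0 := by
    rintro rfl
    exact hPprime.ne_top (by
      rw [hz]; exact eq_top_iff.mpr fun r _ => Submodule.mem_colon_singleton.mpr (by simp))
  have hker : maximalIdeal R ≤ LinearMap.ker (LinearMap.toSpanSingleton R K z) := by
    intro r hr
    have : r ∈ P := hPm ▸ hr
    rw [hz] at this
    simpa [LinearMap.mem_ker, LinearMap.toSpanSingleton_apply] using
      Submodule.mem_colon_singleton.mp this
  let f : (R ⧸ maximalIdeal R) →ₗ[R] K :=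
    Submodule.liftQ (maximalIdeal R) (LinearMap.toSpanSingleton R K z) hker
  have : f (Submodule.Quotient.mk 1) = z := by
    simp only [f]
    rw [Submodule.liftQ_apply, LinearMap.toSpanSingleton_apply, one_smul]
  rw [Subsingleton.elim f 0] at this
  exact hz0 (by simpa using this.symm)


lemma subsingleton_hom_of_subsingleton_ext0 {R : Type u} [CommRing R]
    (X Y : ModuleCat.{u} R) (h : Subsingleton (extMod R X Y 0)) :
    Subsingleton (X ⟶ Y) := by
  let G := (linearYoneda R (ModuleCat.{u} R)).obj Y
  haveI : Limits.PreservesLimits (G ⋙ forget₂ (ModuleCat.{u} R) AddCommGrpCat) := by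
    have e : G ⋙ forget₂ (ModuleCat.{u} R) AddCommGrpCat.{u} = preadditiveYoneda.obj Y := rfl
    rw [e]; infer_instance
  haveI : Limits.PreservesLimits G :=
    Limits.preservesLimits_of_reflects_of_preserves G (forget₂ (ModuleCat.{u} R) AddCommGrpCat)
  haveI : Limits.PreservesFiniteLimits G := inferInstance
  haveI : Limits.PreservesFiniteColimits G.rightOp :=
    Limits.preservesFiniteColimits_rightOp G
  let e : (G.rightOp.leftDerived 0).obj X ≅ G.rightOp.obj X :=
    G.rightOp.leftDerivedZeroIsoSelf.app X
  let e2 : ModuleCat.of R (X ⟶ Y) ≅ extMod R X Y 0 := e.unop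
  have := ((forget (ModuleCat.{u} R)).mapIso e2).toEquiv.subsingleton
  exact this

end Aux

set_option synthInstance.maxHeartbeats 1000000
set_option maxHeartbeats 1000000

/-- For a one-dimensional Cohen–Macaulay local ring `R` with canonical
module `K`, and a fractional ideal `I` with `FI = F`, the module `I ⊗_R Hom_R(I, K)` is
torsionfree if and only if the evaluation map `t : I ⊗_R Hom_R(I, K) → K` is injective. -/
theorem stmt0 (R : Type u) [CommRing R] [IsLocalRing R]
    (hCM : IsOneDimCMLocal R)
    (K : Type u) [AddCommGroup K] [Module R K]
    (hK : IsCanonicalModuleAt R (IsLocalRing.maximalIdeal R) K)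
    (I : Submodule R (FractionRing R)) (hI : IsFracIdealUnit R I) :
    Submodule.torsion R (I ⊗[R] (I →ₗ[R] K)) = ⊥ ↔
      Function.Injective (evalMap R I K) := by
  obtain ⟨hNoeth, hdim, -⟩ := hCM
  haveI := hNoeth
  obtain ⟨hFG, u, huI, hu⟩ := hI
  constructor
  · intro htor x y hxy
    have h0 : evalMap R I K (x - y) = 0 := by rw [map_sub, hxy, sub_self]
    have hmem := ker_eval_le_torsion K I hFG huI hu (x - y) h0
    rw [htor, Submodule.mem_bot] at hmem
    exact sub_eq_zero.mp hmem
  · intro hinj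
    have hsub : Subsingleton ((R ⧸ IsLocalRing.maximalIdeal R) →ₗ[R] K) := by
      have h0 := hK.2.1 0 (by norm_num)
      have h1 := subsingleton_hom_of_subsingleton_ext0
        (ModuleCat.of R (R ⧸ IsLocalRing.maximalIdeal R)) (ModuleCat.of R K) h0
      exact ⟨fun f g => congrArg ModuleCat.Hom.hom (h1.elim (ModuleCat.ofHom f) (ModuleCat.ofHom g))⟩
    have hKt := torsion_K_eq_bot hNoeth hdim K hsub
    rw [eq_bot_iff]
    intro x hx
    obtain ⟨r, hr⟩ := (Submodule.mem_torsion_iff _).mp hx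
    have h1 : (r : R) • evalMap R I K x = 0 := by
      rw [← map_smul, show (r : R) • x = r • x from rfl, hr, map_zero]
    have hxm : evalMap R I K x ∈ Submodule.torsion R K := ⟨r, h1⟩
    rw [hKt, Submodule.mem_bot] at hxm
    have h2 : evalMap R I K x = evalMap R I K 0 := by rw [hxm, map_zero]
    rw [Submodule.mem_bot]
    exact hinj h2

end
end

section
/- Let R = k[[t^{a_1}, …, t^{a_ℓ}]] be a numerical semigroup ring with e = a_1 ≥ 2, a = c(H) − 1, and K_R = Σ_{n ∈ ℤ∖H} R t^{a−n}. Let I = (1, t^{c_1}) and J = K_R : I = (1, t^{c_2}) be monomial fractional ideals with c_1, c_2 > 0, and assume IJ = K_R and μ_R(K_R) = 4 (so 1, t^{c_1}, t^{c_2}, t^{c_1+c_2} minimally generate K_R). Set c_3 = c_1 + c_2 and choose b_1, b_2, b_3 ∈ S with c_1 = a − b_1, c_2 = a − b_2, c_3 = a − b_3 (so b_3 = b_1 + b_2 − a). Then: (1) a = b_1 + b_2 − b_3 ∉ H; (2) 2b_1 − a = b_1 + b_3 − b_2 ∈ H; (3) 2b_2 − a = b_2 + b_3 − b_1 ∈ H;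 (4) b_2 + b_3 − a = 2b_3 − b_1 ∈ H; (5) b_1 + b_3 − a = 2b_3 − b_2 ∈ H; (6) 2b_2 − b_3 ∈ H. -/
open CategoryTheory TensorProduct PowerSeries

set_option synthInstance.maxHeartbeats 1000000
set_option maxHeartbeats 2000000

noncomputable section

/-- The numerical semigroup `H = ⟨a_1, …, a_ℓ⟩ ⊆ ℕ`. -/
def nsH (l : ℕ) (a : Fin l → ℕ) : AddSubmonoid ℕ :=
  AddSubmonoid.closure (Set.range a)

/-- The conductor `c(H)` of the numerical semigroup `H`:
the least `c` with `n ∈ H` for all `n ≥ c`. -/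
def nsCond (l : ℕ) (a : Fin l → ℕ) : ℕ :=
  sInf {c : ℕ | ∀ n : ℕ, c ≤ n → n ∈ nsH l a}

/-- `a = c(H) − 1`, the Frobenius number of `H`. -/
def nsFrob (l : ℕ) (a : Fin l → ℕ) : ℕ := nsCond l a - 1

/-- The numerical semigroup ring `R = k[[t^{a_1}, …, t^{a_ℓ}]] ⊆ V = k[[t]]`. -/
def nsRing (k : Type*) [Field k] (l : ℕ) (a : Fin l → ℕ) :
    Subalgebra k (PowerSeries k) :=
  Algebra.adjoin k (Set.range fun i => (PowerSeries.X : PowerSeries k) ^ (a i))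

/-- The canonical module `K_R = Σ_{n ∈ ℤ∖H} R t^{a−n}` of the numerical semigroup ring,
as the `R`-submodule of `V = k[[t]]` spanned by the monomials `t^m` (`m ∈ ℕ`) with
`a − m ∉ H` (as integers), where `a = c(H) − 1`. -/
def nsCanon (k : Type*) [Field k] (l : ℕ) (a : Fin l → ℕ) :
    Submodule (nsRing k l a) (PowerSeries k) :=
  Submodule.span (nsRing k l a)
    {x : PowerSeries k | ∃ m : ℕ,
      (¬ ∃ h ∈ nsH l a, (h : ℤ) = (nsFrob l a : ℤ) - m) ∧
      x = (PowerSeries.X : PowerSeries k) ^ m}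

/-- A monomial (fractional) ideal of the numerical semigroup ring: an `R`-submodule of
`V = k[[t]]` spanned by monomials `tⁿ`. -/
def IsMonomialSub (k : Type*) [Field k] (l : ℕ) (a : Fin l → ℕ)
    (I : Submodule (nsRing k l a) (PowerSeries k)) : Prop :=
  ∃ Λ : Set ℕ, I = Submodule.span (nsRing k l a)
    ((fun n => (PowerSeries.X : PowerSeries k) ^ n) '' Λ)

/-- A monomial ideal of the numerical semigroup ring: an ideal generated by
powers of `t`. -/
def IsMonomialIdeal (k : Type*) [Field k] (l : ℕ) (a : Fin l → ℕ)
    (I : Ideal (nsRing k l a)) : Prop :=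
  ∃ Λ : Set ℕ, I = Ideal.span
    {x : nsRing k l a | ∃ n ∈ Λ, (x : PowerSeries k) = (PowerSeries.X : PowerSeries k) ^ n}

/-- The maximal ideal `m = (t^{a_1}, …, t^{a_ℓ})` of the numerical semigroup ring. -/
def nsMax (k : Type*) [Field k] (l : ℕ) (a : Fin l → ℕ) : Ideal (nsRing k l a) :=
  Ideal.span {x : nsRing k l a | ∃ i : Fin l,
    (x : PowerSeries k) = (PowerSeries.X : PowerSeries k) ^ (a i)}


/-- The colon `M : N = {x ∈ A | x N ⊆ M}` of two `R`-submodules of an `R`-algebra `A`. -/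
def colonSub {R A : Type*} [CommRing R] [CommRing A] [Algebra R A]
    (M N : Submodule R A) : Submodule R A where
  carrier := {x : A | ∀ y ∈ N, x * y ∈ M}
  add_mem' := fun {a b} ha hb y hy => by
    rw [add_mul]; exact M.add_mem (ha y hy) (hb y hy)
  zero_mem' := fun y hy => by rw [zero_mul]; exact M.zero_mem
  smul_mem' := fun c {x} hx y hy => by
    rw [smul_mul_assoc]; exact M.smul_mem c (hx y hy)

/-- The set `S = {α_i : 1 ≤ i ≤ e−1}` where
`α_i = max {n ∈ ℤ∖H : n ≡ i mod e}`: the elements of `ℕ∖H` that are largest in their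
residue class modulo `e`. (For `e ∈ H` the residue class `0 mod e` contributes nothing.) -/
def nsS (l : ℕ) (a : Fin l → ℕ) (e : ℕ) : Set ℕ :=
  {n : ℕ | n ∉ nsH l a ∧ ∀ m : ℕ, m ∉ nsH l a → m % e = n % e → m ≤ n}

/-- The numerical semigroup `H`, viewed inside `ℤ`. -/
def nsHz (l : ℕ) (a : Fin l → ℕ) : Set ℤ :=
  {n : ℤ | ∃ h ∈ nsH l a, (h : ℤ) = n}


namespace Stmt15Aux

/-- Monomials with exponent in `H` lie in the semigroup ring. -/
lemma Xpow_mem (k : Type*) [Field k] (l : ℕ) (a : Fin l → ℕ) {h : ℕ} (hh : h ∈ nsH l a) :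
    (X : PowerSeries k) ^ h ∈ nsRing k l a := by
  induction hh using AddSubmonoid.closure_induction with
  | mem x hx => obtain ⟨i, rfl⟩ := hx; exact Algebra.subset_adjoin (Set.mem_range_self i)
  | zero => simpa using (nsRing k l a).one_mem
  | add x y hx hy ihx ihy => rw [pow_add]; exact mul_mem ihx ihy

/-- Elements of the semigroup ring are supported on `H`. -/
lemma coeff_mem (k : Type*) [Field k] (l : ℕ) (a : Fin l → ℕ) {r : PowerSeries k}
    (hr : r ∈ nsRing k l a) : ∀ j, PowerSeries.coeff j r ≠ 0 → j ∈ nsH l a := by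
  induction hr using Algebra.adjoin_induction with
  | mem x hx =>
    obtain ⟨i, rfl⟩ := hx
    intro j hj
    rw [coeff_X_pow] at hj
    by_cases h : j = a i
    · subst h; exact AddSubmonoid.subset_closure (Set.mem_range_self i)
    · simp [h] at hj
  | algebraMap c =>
    intro j hj
    by_cases h : j = 0
    · subst h; exact zero_mem _
    · simp [PowerSeries.algebraMap_apply, PowerSeries.coeff_C, h] at hj
  | add x y hx hy ihx ihy =>
    intro j hj
    rw [map_add] at hj
    by_cases h : PowerSeries.coeff j x ≠ 0
    · exact ihx j h
    · push_neg at h; exact ihy j (by intro h2; rw [h, h2, add_zero] at hj; exact hj rfl)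
  | mul x y hx hy ihx ihy =>
    intro j hj
    rw [coeff_mul] at hj
    obtain ⟨p, hp, hpne⟩ := Finset.exists_ne_zero_of_sum_ne_zero hj
    rw [Finset.HasAntidiagonal.mem_antidiagonal] at hp
    rw [← hp]
    exact add_mem (ihx p.1 (left_ne_zero_of_mul hpne)) (ihy p.2 (right_ne_zero_of_mul hpne))

/-- Membership of a monomial in a monomially generated `R`-submodule of `k[[t]]`. -/
lemma mem_span_monomials (k : Type*) [Field k] (l : ℕ) (a : Fin l → ℕ) (Λ : Set ℕ) (n : ℕ) :
    ((X : PowerSeries k) ^ n ∈ Submodule.span (nsRing k l a)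
      ((fun m => (X : PowerSeries k) ^ m) '' Λ)) ↔ ∃ m ∈ Λ, ∃ h ∈ nsH l a, n = m + h := by
  constructor
  · intro hx
    let M : Submodule (nsRing k l a) (PowerSeries k) :=
      { carrier := {f | ∀ j, PowerSeries.coeff j f ≠ 0 → ∃ m ∈ Λ, ∃ h ∈ nsH l a, j = m + h}
        add_mem' := by
          intro f g hf hg j hj
          rw [map_add] at hj
          by_cases h : PowerSeries.coeff j f ≠ 0
          · exact hf j h
          · push_neg at h
            exact hg j (by intro h2; rw [h, h2, add_zero] at hj; exact hj rfl)
        zero_mem' := by intro j hj; simp at hj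
        smul_mem' := by
          intro c f hf j hj
          have hcf : c • f = (c : PowerSeries k) * f := rfl
          rw [hcf, coeff_mul] at hj
          obtain ⟨p, hp, hpne⟩ := Finset.exists_ne_zero_of_sum_ne_zero hj
          rw [Finset.HasAntidiagonal.mem_antidiagonal] at hp
          have h1 : p.1 ∈ nsH l a := coeff_mem k l a c.2 p.1 (left_ne_zero_of_mul hpne)
          obtain ⟨m, hm, h, hh, hps⟩ := hf p.2 (right_ne_zero_of_mul hpne)
          exact ⟨m, hm, h + p.1, add_mem hh h1, by omega⟩ }
    have hle : Submodule.span (nsRing k l a) ((fun m => (X : PowerSeries k) ^ m) '' Λ) ≤ M := by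
      rw [Submodule.span_le]
      rintro x ⟨m, hm, rfl⟩
      intro j hj
      rw [coeff_X_pow] at hj
      by_cases h : j = m
      · exact ⟨m, hm, 0, zero_mem _, by omega⟩
      · simp [h] at hj
    exact hle hx n (by rw [coeff_X_pow]; simp)
  · rintro ⟨m, hm, h, hh, rfl⟩
    have heq : (X : PowerSeries k) ^ (m + h)
        = (⟨(X : PowerSeries k) ^ h, Xpow_mem k l a hh⟩ : nsRing k l a) • (X : PowerSeries k) ^ m := by
      show _ = (X : PowerSeries k) ^ h * (X : PowerSeries k) ^ m
      rw [← pow_add, add_comm]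
    rw [heq]
    exact Submodule.smul_mem _ _ (Submodule.subset_span ⟨m, hm, rfl⟩)

lemma spanPairIff (k : Type*) [Field k] (l : ℕ) (a : Fin l → ℕ) (c n : ℕ) :
    ((X : PowerSeries k) ^ n ∈ Submodule.span (nsRing k l a)
      ({1, (X : PowerSeries k) ^ c} : Set (PowerSeries k))) ↔
      (n ∈ nsH l a ∨ ∃ h ∈ nsH l a, n = c + h) := by
  have himg : ({1, (X : PowerSeries k) ^ c} : Set (PowerSeries k)) =
      (fun m => (X : PowerSeries k) ^ m) '' {0, c} := by
    rw [Set.image_insert_eq, Set.image_singleton, pow_zero]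
  rw [himg, mem_span_monomials]
  constructor
  · rintro ⟨m, hm, h, hh, rfl⟩
    simp only [Set.mem_insert_iff, Set.mem_singleton_iff] at hm
    rcases hm with rfl | rfl
    · exact Or.inl (by simpa using hh)
    · exact Or.inr ⟨h, hh, rfl⟩
  · rintro (hn | ⟨h, hh, rfl⟩)
    · exact ⟨0, by simp, n, hn, (zero_add n).symm⟩
    · exact ⟨c, by simp, h, hh, rfl⟩

lemma spanTripleIff (k : Type*) [Field k] (l : ℕ) (a : Fin l → ℕ) (c c' n : ℕ) :
    ((X : PowerSeries k) ^ n ∈ Submodule.span (nsRing k l a)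
      ({1, (X : PowerSeries k) ^ c, (X : PowerSeries k) ^ c'} : Set (PowerSeries k))) ↔
      (n ∈ nsH l a ∨ (∃ h ∈ nsH l a, n = c + h) ∨ ∃ h ∈ nsH l a, n = c' + h) := by
  have himg : ({1, (X : PowerSeries k) ^ c, (X : PowerSeries k) ^ c'} : Set (PowerSeries k)) =
      (fun m => (X : PowerSeries k) ^ m) '' {0, c, c'} := by
    rw [Set.image_insert_eq, Set.image_insert_eq, Set.image_singleton, pow_zero]
  rw [himg, mem_span_monomials]
  constructor
  · rintro ⟨m, hm, h, hh, rfl⟩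
    simp only [Set.mem_insert_iff, Set.mem_singleton_iff] at hm
    rcases hm with rfl | rfl | rfl
    · exact Or.inl (by simpa using hh)
    · exact Or.inr (Or.inl ⟨h, hh, rfl⟩)
    · exact Or.inr (Or.inr ⟨h, hh, rfl⟩)
  · rintro (hn | ⟨h, hh, rfl⟩ | ⟨h, hh, rfl⟩)
    · exact ⟨0, by simp, n, hn, (zero_add n).symm⟩
    · exact ⟨c, by simp, h, hh, rfl⟩
    · exact ⟨c', by simp, h, hh, rfl⟩

lemma mem_colonSub {R A : Type*} [CommRing R] [CommRing A] [Algebra R A]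
    (M N : Submodule R A) (x : A) : x ∈ colonSub M N ↔ ∀ y ∈ N, x * y ∈ M := Iff.rfl

lemma mem_colon_pair {R A : Type*} [CommRing R] [CommRing A] [Algebra R A]
    (M : Submodule R A) (g1 g2 x : A) :
    x ∈ colonSub M (Submodule.span R ({g1, g2} : Set A)) ↔ x * g1 ∈ M ∧ x * g2 ∈ M := by
  rw [mem_colonSub]
  constructor
  · intro hx
    exact ⟨hx g1 (Submodule.subset_span (by simp)), hx g2 (Submodule.subset_span (by simp))⟩
  · rintro ⟨h1, h2⟩ y hy
    induction hy using Submodule.span_induction with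
    | mem y hy =>
      simp only [Set.mem_insert_iff, Set.mem_singleton_iff] at hy
      rcases hy with rfl | rfl
      · exact h1
      · exact h2
    | zero => rw [mul_zero]; exact zero_mem _
    | add y z hy hz ihy ihz => rw [mul_add]; exact add_mem ihy ihz
    | smul c y hy ihy =>
      have hcy : x * (c • y) = c • (x * y) := by
        rw [Algebra.smul_def, Algebra.smul_def]; ring
      rw [hcy]
      exact Submodule.smul_mem _ _ ihy

/-- Monomial membership in the canonical module. -/
lemma KmemIff (k : Type*) [Field k] (l : ℕ) (a : Fin l → ℕ) (n : ℕ) :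
    ((X : PowerSeries k) ^ n ∈ nsCanon k l a) ↔
      ¬∃ h ∈ nsH l a, (h : ℤ) = (nsFrob l a : ℤ) - n := by
  have hset : {x : PowerSeries k | ∃ m : ℕ,
      (¬∃ h ∈ nsH l a, (h : ℤ) = (nsFrob l a : ℤ) - m) ∧ x = (X : PowerSeries k) ^ m} =
      (fun m => (X : PowerSeries k) ^ m) ''
        {m : ℕ | ¬∃ h ∈ nsH l a, (h : ℤ) = (nsFrob l a : ℤ) - m} := by
    ext x
    constructor
    · rintro ⟨m, h1, rfl⟩; exact ⟨m, h1, rfl⟩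
    · rintro ⟨m, h1, rfl⟩; exact ⟨m, h1, rfl⟩
  rw [nsCanon, hset, mem_span_monomials]
  constructor
  · rintro ⟨m, hm, h, hh, rfl⟩ ⟨g, hg, hgeq⟩
    exact hm ⟨g + h, add_mem hg hh, by push_cast at hgeq ⊢; omega⟩
  · intro hn
    exact ⟨n, hn, 0, zero_mem _, by omega⟩

open scoped Pointwise in
lemma pairMulSet (k : Type*) [Field k] (c1 c2 : ℕ) :
    ({(1 : PowerSeries k), (X : PowerSeries k) ^ c1} : Set (PowerSeries k)) *
      ({(1 : PowerSeries k), (X : PowerSeries k) ^ c2} : Set (PowerSeries k)) =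
      {1, (X : PowerSeries k) ^ c1, (X : PowerSeries k) ^ c2,
        (X : PowerSeries k) ^ (c1 + c2)} := by
  ext x
  simp only [Set.mem_mul, Set.mem_insert_iff, Set.mem_singleton_iff]
  constructor
  · rintro ⟨y, (rfl | rfl), z, (rfl | rfl), rfl⟩ <;> simp [pow_add]
  · rintro (rfl | rfl | rfl | rfl)
    · exact ⟨1, Or.inl rfl, 1, Or.inl rfl, one_mul 1⟩
    · exact ⟨X ^ c1, Or.inr rfl, 1, Or.inl rfl, mul_one _⟩
    · exact ⟨1, Or.inl rfl, X ^ c2, Or.inr rfl, one_mul _⟩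
    · exact ⟨X ^ c1, Or.inr rfl, X ^ c2, Or.inr rfl, (pow_add X c1 c2).symm⟩

end Stmt15Aux

open Stmt15Aux in

/-- (Lemma 5.1) Let `I = (1, t^{c_1})`, `J = K_R : I = (1, t^{c_2})` with
`c_1, c_2 > 0`, `IJ = K_R` and `μ_R(K_R) = 4`. Choose `b_1, b_2, b_3 ∈ S` with
`c_1 = a − b_1`, `c_2 = a − b_2`, `c_1 + c_2 = a − b_3`. Then the six arithmetic
assertions of Lemma 5.1 hold. -/
theorem stmt15 (k : Type*) [Field k] (l : ℕ) (hl : 0 < l) (a : Fin l → ℕ)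
    (hpos : 0 < a ⟨0, hl⟩) (hmono : StrictMono a) (hgcd : Finset.univ.gcd a = 1)
    (he2 : 2 ≤ a ⟨0, hl⟩)
    (c1 c2 : ℕ) (hc1 : 0 < c1) (hc2 : 0 < c2)
    (I : Submodule (nsRing k l a) (PowerSeries k))
    (hI : I = Submodule.span (nsRing k l a)
      {(1 : PowerSeries k), (PowerSeries.X : PowerSeries k) ^ c1})
    (hJ : colonSub (nsCanon k l a) I = Submodule.span (nsRing k l a)
      {(1 : PowerSeries k), (PowerSeries.X : PowerSeries k) ^ c2})
    (hIJ : I * colonSub (nsCanon k l a) I = nsCanon k l a)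
    (hmuK : minGen (nsRing k l a) (nsCanon k l a) = 4)
    (b1 b2 b3 : ℕ)
    (hb1 : b1 ∈ nsS l a (a ⟨0, hl⟩)) (hb2 : b2 ∈ nsS l a (a ⟨0, hl⟩))
    (hb3 : b3 ∈ nsS l a (a ⟨0, hl⟩))
    (hc1b : (c1 : ℤ) = (nsFrob l a : ℤ) - b1)
    (hc2b : (c2 : ℤ) = (nsFrob l a : ℤ) - b2)
    (hc3b : ((c1 : ℤ) + c2) = (nsFrob l a : ℤ) - b3) :
    ((nsFrob l a : ℤ) = (b1 : ℤ) + b2 - b3 ∧ ((nsFrob l a : ℤ)) ∉ nsHz l a) ∧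
    (2 * (b1 : ℤ) - (nsFrob l a : ℤ) = (b1 : ℤ) + b3 - b2 ∧
      ((b1 : ℤ) + b3 - b2) ∈ nsHz l a) ∧
    (2 * (b2 : ℤ) - (nsFrob l a : ℤ) = (b2 : ℤ) + b3 - b1 ∧
      ((b2 : ℤ) + b3 - b1) ∈ nsHz l a) ∧
    ((b2 : ℤ) + b3 - (nsFrob l a : ℤ) = 2 * (b3 : ℤ) - b1 ∧
      (2 * (b3 : ℤ) - b1) ∈ nsHz l a) ∧
    ((b1 : ℤ) + b3 - (nsFrob l a : ℤ) = 2 * (b3 : ℤ) - b2 ∧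
      (2 * (b3 : ℤ) - b2) ∈ nsHz l a) ∧
    (2 * (b2 : ℤ) - b3) ∈ nsHz l a := by
  classical
  obtain ⟨hb1H, -⟩ := hb1
  obtain ⟨hb2H, -⟩ := hb2
  obtain ⟨hb3H, -⟩ := hb3
  -- conductor facts
  have hne : {c : ℕ | ∀ n : ℕ, c ≤ n → n ∈ nsH l a}.Nonempty := by
    by_contra hcc
    rw [Set.not_nonempty_iff_eq_empty] at hcc
    have h0 : nsCond l a = 0 := by rw [nsCond, hcc, Nat.sInf_empty]
    have hF0 : nsFrob l a = 0 := by rw [nsFrob, h0]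
    rw [hF0] at hc1b
    omega
  have hcondmem : ∀ n : ℕ, nsCond l a ≤ n → n ∈ nsH l a := Nat.sInf_mem hne
  have hcond : ∀ n : ℕ, nsFrob l a < n → n ∈ nsH l a := by
    intro n hn
    refine hcondmem n ?_
    have : nsFrob l a = nsCond l a - 1 := rfl
    omega
  have hcondpos : nsCond l a ≠ 0 := by
    intro h0
    exact hb1H (hcondmem b1 (by omega))
  have hFnotH : nsFrob l a ∉ nsH l a := by
    intro hF
    have hmem : ∀ n : ℕ, nsFrob l a ≤ n → n ∈ nsH l a := by
      intro n hn
      rcases eq_or_lt_of_le hn with rfl | h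
      · exact hF
      · exact hcond n h
    have hle : nsCond l a ≤ nsFrob l a := Nat.sInf_le hmem
    have : nsFrob l a = nsCond l a - 1 := rfl
    omega
  -- `K = (1, t^{c1}, t^{c2}, t^{c1+c2})`
  have hIJspan : nsCanon k l a = Submodule.span (nsRing k l a)
      ({1, (X : PowerSeries k) ^ c1, (X : PowerSeries k) ^ c2,
        (X : PowerSeries k) ^ (c1 + c2)} : Set (PowerSeries k)) := by
    rw [← hIJ, hJ, hI, Submodule.span_mul_span, pairMulSet]
  -- redundancy forces fewer than 4 generators
  have hmin3 : ∀ x y z w : PowerSeries k,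
      nsCanon k l a = Submodule.span (nsRing k l a) ({x, y, z, w} : Set (PowerSeries k)) →
      x ∈ Submodule.span (nsRing k l a) ({y, z, w} : Set (PowerSeries k)) → False := by
    intro x y z w hK hx
    have h2 : Submodule.span (nsRing k l a) ({x, y, z, w} : Set (PowerSeries k)) =
        Submodule.span (nsRing k l a) ({y, z, w} : Set (PowerSeries k)) :=
      Submodule.span_insert_eq_span hx
    have hfin : ((({y, z, w} : Finset (PowerSeries k))) : Set (PowerSeries k)) =
        ({y, z, w} : Set (PowerSeries k)) := by simp
    have hlemem : minGen (nsRing k l a) (nsCanon k l a) ≤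
        ({y, z, w} : Finset (PowerSeries k)).card :=
      Nat.sInf_le ⟨{y, z, w}, rfl, by rw [hfin, ← h2, ← hK]⟩
    have hcard : ({y, z, w} : Finset (PowerSeries k)).card ≤ 3 := by
      refine le_trans (Finset.card_insert_le _ _) ?_
      have h3 := Finset.card_insert_le z ({w} : Finset (PowerSeries k))
      simp only [Finset.card_singleton] at h3 ⊢
      omega
    omega
  have red1 : (X : PowerSeries k) ^ c1 ∈ Submodule.span (nsRing k l a)
      ({1, (X : PowerSeries k) ^ c2, (X : PowerSeries k) ^ (c1 + c2)} : Set (PowerSeries k)) →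
      False := by
    intro h
    refine hmin3 ((X : PowerSeries k) ^ c1) 1 ((X : PowerSeries k) ^ c2)
      ((X : PowerSeries k) ^ (c1 + c2)) ?_ h
    rw [hIJspan]
    congr 1
    ext u
    simp only [Set.mem_insert_iff, Set.mem_singleton_iff]
    tauto
  have red2 : (X : PowerSeries k) ^ c2 ∈ Submodule.span (nsRing k l a)
      ({1, (X : PowerSeries k) ^ c1, (X : PowerSeries k) ^ (c1 + c2)} : Set (PowerSeries k)) →
      False := by
    intro h
    refine hmin3 ((X : PowerSeries k) ^ c2) 1 ((X : PowerSeries k) ^ c1)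
      ((X : PowerSeries k) ^ (c1 + c2)) ?_ h
    rw [hIJspan]
    congr 1
    ext u
    simp only [Set.mem_insert_iff, Set.mem_singleton_iff]
    tauto
  have red3 : (X : PowerSeries k) ^ (c1 + c2) ∈ Submodule.span (nsRing k l a)
      ({1, (X : PowerSeries k) ^ c1, (X : PowerSeries k) ^ c2} : Set (PowerSeries k)) →
      False := by
    intro h
    refine hmin3 ((X : PowerSeries k) ^ (c1 + c2)) 1 ((X : PowerSeries k) ^ c1)
      ((X : PowerSeries k) ^ c2) ?_ h
    rw [hIJspan]
    congr 1
    ext u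
    simp only [Set.mem_insert_iff, Set.mem_singleton_iff]
    tauto
  -- minimality facts
  have N1 : c1 ∉ nsH l a := fun hc =>
    red1 ((spanTripleIff k l a c2 (c1 + c2) c1).mpr (Or.inl hc))
  have N2 : c2 ∉ nsH l a := fun hc =>
    red2 ((spanTripleIff k l a c1 (c1 + c2) c2).mpr (Or.inl hc))
  have N3 : c1 + c2 ∉ nsH l a := fun hc =>
    red3 ((spanTripleIff k l a c1 c2 (c1 + c2)).mpr (Or.inl hc))
  have N4 : ¬∃ h ∈ nsH l a, (h : ℤ) = (c2 : ℤ) - (c1 : ℤ) := by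
    rintro ⟨h, hh, heq⟩
    exact red2 ((spanTripleIff k l a c1 (c1 + c2) c2).mpr
      (Or.inr (Or.inl ⟨h, hh, by omega⟩)))
  have N5 : ¬∃ h ∈ nsH l a, (h : ℤ) = (c1 : ℤ) - (c2 : ℤ) := by
    rintro ⟨h, hh, heq⟩
    exact red1 ((spanTripleIff k l a c2 (c1 + c2) c1).mpr
      (Or.inr (Or.inl ⟨h, hh, by omega⟩)))
  -- the main tool: testing monomials against `J = K : I`
  have colonIff : ∀ n : ℕ, ((X : PowerSeries k) ^ n ∈ colonSub (nsCanon k l a) I) ↔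
      ((X : PowerSeries k) ^ n ∈ nsCanon k l a ∧
        (X : PowerSeries k) ^ (n + c1) ∈ nsCanon k l a) := by
    intro n
    rw [hI, mem_colon_pair, mul_one, ← pow_add]
  have tool : ∀ n : ℕ, n ∉ nsH l a → (¬∃ h ∈ nsH l a, n = c2 + h) →
      (¬∃ h ∈ nsH l a, (h : ℤ) = (nsFrob l a : ℤ) - n) →
      ∃ h ∈ nsH l a, (h : ℤ) = (nsFrob l a : ℤ) - n - c1 := by
    intro n h1 h2 h3
    have hnJ : (X : PowerSeries k) ^ n ∉ Submodule.span (nsRing k l a)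
        ({1, (X : PowerSeries k) ^ c2} : Set (PowerSeries k)) := by
      rw [spanPairIff]
      rintro (h | h)
      exacts [h1 h, h2 h]
    rw [← hJ, colonIff n] at hnJ
    have hA : (X : PowerSeries k) ^ n ∈ nsCanon k l a := (KmemIff k l a n).mpr h3
    have hB : (X : PowerSeries k) ^ (n + c1) ∉ nsCanon k l a := fun hB => hnJ ⟨hA, hB⟩
    obtain ⟨h, hh, heq⟩ := not_not.mp (fun hc => hB ((KmemIff k l a (n + c1)).mpr hc))
    exact ⟨h, hh, by push_cast at heq ⊢; omega⟩
  refine ⟨⟨by omega, ?_⟩, ⟨by omega, ?_⟩, ⟨by omega, ?_⟩, ⟨by omega, ?_⟩, ⟨by omega, ?_⟩, ?_⟩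
  · -- (1) the Frobenius number is not in H
    rintro ⟨h, hh, heq⟩
    have hEq : h = nsFrob l a := by omega
    exact hFnotH (hEq ▸ hh)
  · -- (2) 2b1 - a ∈ H
    obtain ⟨h, hh, heq⟩ := tool c1 N1
      (by rintro ⟨h, hh, hEq⟩; exact N5 ⟨h, hh, by omega⟩)
      (by
        rintro ⟨h, hh, hEq⟩
        have : h = b1 := by omega
        exact hb1H (this ▸ hh))
    exact ⟨h, hh, by omega⟩
  · -- (3) 2b2 - a ∈ H
    by_contra hcon
    obtain ⟨h, hh, heq⟩ := tool b2 hb2H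
      (by rintro ⟨h, hh, hEq⟩; exact hcon ⟨h, hh, by omega⟩)
      (by
        rintro ⟨h, hh, hEq⟩
        have : h = c2 := by omega
        exact N2 (this ▸ hh))
    exact N4 ⟨h, hh, by omega⟩
  · -- (4) b2 + b3 - a ∈ H
    by_contra hcon
    obtain ⟨h, hh, heq⟩ := tool b3 hb3H
      (by rintro ⟨h, hh, hEq⟩; exact hcon ⟨h, hh, by omega⟩)
      (by
        rintro ⟨h, hh, hEq⟩
        have : h = c1 + c2 := by omega
        exact N3 (this ▸ hh))
    have hEq : h = c2 := by omega
    exact N2 (hEq ▸ hh)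
  · -- (5) b1 + b3 - a ∈ H
    obtain ⟨h, hh, heq⟩ := tool (c1 + c2) N3
      (by
        rintro ⟨h, hh, hEq⟩
        have : h = c1 := by omega
        exact N1 (this ▸ hh))
      (by
        rintro ⟨h, hh, hEq⟩
        have : h = b3 := by omega
        exact hb3H (this ▸ hh))
    exact ⟨h, hh, by omega⟩
  · -- (6) 2b2 - b3 ∈ H
    rcases lt_trichotomy c1 c2 with hlt | hEqc | hgt
    · by_contra hcon
      obtain ⟨h, hh, heq⟩ := tool (c2 - c1)
        (fun hmem => N4 ⟨c2 - c1, hmem, by omega⟩)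
        (by rintro ⟨h, hh, hEq⟩; omega)
        (by rintro ⟨h, hh, hEq⟩; exact hcon ⟨h, hh, by omega⟩)
      have hEq : h = b2 := by omega
      exact hb2H (hEq ▸ hh)
    · exact absurd ⟨0, zero_mem _, by omega⟩ N4
    · exact ⟨nsFrob l a + (c1 - c2), hcond _ (by omega), by omega⟩


end
end

section
/- Let R = k[[t^{a_1}, …, t^{a_ℓ}]] be a numerical semigroup ring with e = a_1 ≥ 2, and let I be a monomial ideal with R ⊆ I ⊆ V = k[[t]] and J = K_R : I. Assume μ_R(I) = μ_R(J) = 2, IJ = K_R, and μ_R(K_R) = 4. Then e = a_1 ≥ 8. -/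
open CategoryTheory TensorProduct PowerSeries

set_option synthInstance.maxHeartbeats 1000000
set_option maxHeartbeats 2000000

noncomputable section

section Aux
variable (k : Type*) [Field k] (l : ℕ) (a : Fin l → ℕ)

/-- span of monomials with exponents in E -/
def spanMono (E : Set ℕ) : Submodule (nsRing k l a) (PowerSeries k) :=
  Submodule.span (nsRing k l a) ((fun n => (X : PowerSeries k) ^ n) '' E)

/-- exponent set of a submodule -/
def eSet (P : Submodule (nsRing k l a) (PowerSeries k)) : Set ℕ :=
  {n | (X : PowerSeries k) ^ n ∈ P}

/-- minimal generators of an exponent set over H -/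
def gmin (E : Set ℕ) : Set ℕ :=
  {n | n ∈ E ∧ ∀ m ∈ E, ∀ h ∈ nsH l a, n = m + h → h = 0}

variable {k : Type*} [Field k] {l : ℕ} {a : Fin l → ℕ}


lemma pow_mem_nsRing {h : ℕ} (hh : h ∈ nsH l a) :
    (X : PowerSeries k) ^ h ∈ nsRing k l a := by
  induction hh using AddSubmonoid.closure_induction with
  | mem x hx => obtain ⟨i, rfl⟩ := hx; exact Algebra.subset_adjoin ⟨i, rfl⟩
  | zero => simpa using (nsRing k l a).one_mem
  | add x y hx hy ihx ihy => rw [pow_add]; exact mul_mem ihx ihy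

lemma coeff_eq_zero_of_not_mem {x : PowerSeries k} (hx : x ∈ nsRing k l a)
    {n : ℕ} (hn : n ∉ nsH l a) : coeff n x = 0 := by
  induction hx using Algebra.adjoin_induction generalizing n with
  | mem y hy =>
      obtain ⟨i, rfl⟩ := hy
      rw [coeff_X_pow, if_neg]
      rintro rfl
      exact hn (AddSubmonoid.subset_closure ⟨i, rfl⟩)
  | algebraMap r =>
      rw [PowerSeries.algebraMap_apply, Algebra.algebraMap_self_apply, coeff_C, if_neg]
      rintro rfl
      exact hn (zero_mem _)
  | add y z hy hz ihy ihz => rw [map_add, ihy hn, ihz hn, add_zero]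
  | mul y z hy hz ihy ihz =>
      rw [coeff_mul]
      refine Finset.sum_eq_zero fun p hp => ?_
      rw [Finset.HasAntidiagonal.mem_antidiagonal] at hp
      by_cases h1 : p.1 ∈ nsH l a
      · by_cases h2 : p.2 ∈ nsH l a
        · exact absurd (hp ▸ add_mem h1 h2) hn
        · rw [ihz h2, mul_zero]
      · rw [ihy h1, zero_mul]

lemma exists_bound_of_mem_nsRing {x : PowerSeries k} (hx : x ∈ nsRing k l a) :
    ∃ N, ∀ n, N ≤ n → coeff n x = 0 := by
  induction hx using Algebra.adjoin_induction with
  | mem y hy =>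
      obtain ⟨i, rfl⟩ := hy
      exact ⟨a i + 1, fun n hn => by
        rw [coeff_X_pow, if_neg]; omega⟩
  | algebraMap r =>
      refine ⟨1, fun n hn => ?_⟩
      rw [PowerSeries.algebraMap_apply, Algebra.algebraMap_self_apply, coeff_C, if_neg]; omega
  | add y z hy hz ihy ihz =>
      obtain ⟨N1, h1⟩ := ihy; obtain ⟨N2, h2⟩ := ihz
      exact ⟨max N1 N2, fun n hn => by
        rw [map_add, h1 n (le_trans (le_max_left _ _) hn),
          h2 n (le_trans (le_max_right _ _) hn), add_zero]⟩
  | mul y z hy hz ihy ihz =>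
      obtain ⟨N1, h1⟩ := ihy; obtain ⟨N2, h2⟩ := ihz
      refine ⟨N1 + N2, fun n hn => ?_⟩
      rw [coeff_mul]
      refine Finset.sum_eq_zero fun p hp => ?_
      rw [Finset.HasAntidiagonal.mem_antidiagonal] at hp
      by_cases hc : N1 ≤ p.1
      · rw [h1 p.1 hc, zero_mul]
      · rw [h2 p.2 (by omega), mul_zero]




lemma smul_def' (r : nsRing k l a) (x : PowerSeries k) : r • x = (r : PowerSeries k) * x := rfl

lemma eSet_add_mem {P : Submodule (nsRing k l a) (PowerSeries k)} {n h : ℕ}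
    (hn : n ∈ eSet k l a P) (hh : h ∈ nsH l a) : n + h ∈ eSet k l a P := by
  have : (X : PowerSeries k) ^ (n + h) = (⟨_, pow_mem_nsRing (k := k) hh⟩ : nsRing k l a) • (X : PowerSeries k) ^ n := by
    rw [smul_def', pow_add]; ring
  show (X : PowerSeries k) ^ (n+h) ∈ P
  rw [this]
  exact P.smul_mem _ hn

end Aux

section Aux2
variable {k : Type*} [Field k] {l : ℕ} {a : Fin l → ℕ}

lemma coeff_spanMono {E : Set ℕ} {x : PowerSeries k} (hx : x ∈ spanMono k l a E) {n : ℕ}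
    (hc : coeff n x ≠ 0) : ∃ m ∈ E, ∃ h ∈ nsH l a, n = m + h := by
  induction hx using Submodule.span_induction generalizing n with
  | mem y hy =>
      obtain ⟨m, hm, rfl⟩ := hy
      rw [coeff_X_pow] at hc
      refine ⟨m, hm, 0, zero_mem _, ?_⟩
      by_contra hne
      exact hc (if_neg (by omega))
  | zero => simp at hc
  | add y z hy hz ihy ihz =>
      rw [map_add] at hc
      by_cases h1 : coeff n y = 0
      · exact ihz (by rw [h1, zero_add] at hc; exact hc)
      · exact ihy h1
  | smul r y hy ihy =>
      rw [smul_def', coeff_mul] at hc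
      obtain ⟨p, hp, hne⟩ := Finset.exists_ne_zero_of_sum_ne_zero hc
      rw [Finset.HasAntidiagonal.mem_antidiagonal] at hp
      have h1 : coeff p.1 (r : PowerSeries k) ≠ 0 := fun h => hne (by rw [h, zero_mul])
      have h2 : coeff p.2 y ≠ 0 := fun h => hne (by rw [h, mul_zero])
      have hpH : p.1 ∈ nsH l a := by
        by_contra hnH
        exact h1 (coeff_eq_zero_of_not_mem r.2 hnH)
      obtain ⟨m, hm, h, hh, heq⟩ := ihy h2
      exact ⟨m, hm, h + p.1, add_mem hh hpH, by omega⟩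

lemma bound_spanMono {E : Set ℕ} {x : PowerSeries k} (hx : x ∈ spanMono k l a E) :
    ∃ N, ∀ n, N ≤ n → coeff n x = 0 := by
  induction hx using Submodule.span_induction with
  | mem y hy =>
      obtain ⟨m, hm, rfl⟩ := hy
      exact ⟨m + 1, fun n hn => by rw [coeff_X_pow, if_neg (by omega)]⟩
  | zero => exact ⟨0, fun n _ => by simp⟩
  | add y z hy hz ihy ihz =>
      obtain ⟨N1, h1⟩ := ihy; obtain ⟨N2, h2⟩ := ihz
      exact ⟨max N1 N2, fun n hn => by
        rw [map_add, h1 n (le_trans (le_max_left _ _) hn),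
          h2 n (le_trans (le_max_right _ _) hn), add_zero]⟩
  | smul r y hy ihy =>
      obtain ⟨N1, h1⟩ := ihy
      obtain ⟨N2, h2⟩ := exists_bound_of_mem_nsRing r.2
      refine ⟨N2 + N1, fun n hn => ?_⟩
      rw [smul_def', coeff_mul]
      refine Finset.sum_eq_zero fun p hp => ?_
      rw [Finset.HasAntidiagonal.mem_antidiagonal] at hp
      by_cases hc : N2 ≤ p.1
      · rw [h2 p.1 hc, zero_mul]
      · rw [h1 p.2 (by omega), mul_zero]

lemma pow_mem_spanMono {E : Set ℕ} {m h : ℕ} (hm : m ∈ E) (hh : h ∈ nsH l a) :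
    (X : PowerSeries k) ^ (m + h) ∈ spanMono k l a E :=
  eSet_add_mem (P := spanMono k l a E) (Submodule.subset_span ⟨m, hm, rfl⟩) hh

lemma eSet_spanMono {E : Set ℕ} :
    eSet k l a (spanMono k l a E) = {n | ∃ m ∈ E, ∃ h ∈ nsH l a, n = m + h} := by
  ext n
  constructor
  · intro hn
    refine coeff_spanMono hn (n := n) ?_
    rw [coeff_X_pow, if_pos rfl]; exact one_ne_zero
  · rintro ⟨m, hm, h, hh, rfl⟩
    exact pow_mem_spanMono hm hh

/-- finite-support elements with support in E lie in the monomial span -/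
lemma mem_spanMono_of_supp {E : Set ℕ} {x : PowerSeries k} {N : ℕ}
    (hb : ∀ n, N ≤ n → coeff n x = 0)
    (hs : ∀ n, coeff n x ≠ 0 → n ∈ E) : x ∈ spanMono k l a E := by
  have hx : x = ∑ n ∈ Finset.range N, (coeff n x) • (X : PowerSeries k) ^ n := by
    ext m
    rw [map_sum, Finset.sum_eq_single m ?h0 ?h1]
    · rw [PowerSeries.coeff_smul, coeff_X_pow, if_pos rfl, smul_eq_mul, mul_one]
    case h0 =>
      intro n _ hne
      rw [PowerSeries.coeff_smul, coeff_X_pow, if_neg (fun h => hne h.symm), smul_eq_mul, mul_zero]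
    case h1 =>
      intro hm
      rw [Finset.mem_range] at hm
      rw [PowerSeries.coeff_smul, hb m (by omega), zero_smul]
  rw [hx]
  refine Submodule.sum_mem _ fun n _ => ?_
  by_cases hc : coeff n x = 0
  · rw [hc, zero_smul]; exact zero_mem _
  · have : (coeff n x) • (X : PowerSeries k) ^ n
        = (⟨C (coeff n x), (nsRing k l a).algebraMap_mem _⟩ : nsRing k l a) • (X : PowerSeries k) ^ n := by
      rw [smul_def', smul_eq_C_mul]
    rw [this]
    exact Submodule.smul_mem _ _ (Submodule.subset_span ⟨n, hs n hc, rfl⟩)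
end Aux2

section Aux3
variable {k : Type*} [Field k] {l : ℕ} {a : Fin l → ℕ}

lemma exists_gmin {E : Set ℕ} (hE : ∀ n ∈ E, ∀ h ∈ nsH l a, n + h ∈ E)
    {n : ℕ} (hn : n ∈ E) : ∃ g ∈ gmin l a E, ∃ h ∈ nsH l a, n = g + h := by
  induction n using Nat.strong_induction_on with
  | _ n ih =>
    by_cases hg : n ∈ gmin l a E
    · exact ⟨n, hg, 0, zero_mem _, rfl⟩
    · have : ∃ m ∈ E, ∃ h ∈ nsH l a, n = m + h ∧ h ≠ 0 := by
        by_contra hno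
        push_neg at hno
        exact hg ⟨hn, fun m hm h hh heq => by
          by_contra hne
          exact hne (hno m hm h hh heq)⟩
      obtain ⟨m, hm, h, hh, heq, hne⟩ := this
      obtain ⟨g, hg, h', hh', heq'⟩ := ih m (by omega) hm
      exact ⟨g, hg, h' + h, add_mem hh' hh, by omega⟩

lemma gmin_subset {E : Set ℕ} : gmin l a E ⊆ E := fun _ h => h.1

lemma gmin_spanMono_subset {Λ : Set ℕ} :
    gmin l a (eSet k l a (spanMono k l a Λ)) ⊆ Λ := by
  intro n hn
  have h1 := hn.1
  rw [eSet_spanMono] at h1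
  obtain ⟨m, hm, h, hh, heq⟩ := h1
  have : h = 0 := hn.2 m (by rw [eSet_spanMono]; exact ⟨m, hm, 0, zero_mem _, by omega⟩) h hh heq
  subst this
  rw [add_zero] at heq
  exact heq ▸ hm

/-- injectivity of residues of gmin mod any nonzero element of H -/
lemma gmin_finite {e : ℕ} (he : e ∈ nsH l a) (he0 : e ≠ 0) (E : Set ℕ) :
    (gmin l a E).Finite := by
  haveI : NeZero e := ⟨he0⟩
  have : (gmin l a E).InjOn (fun n : ℕ => (n : ZMod e)) := by
    intro n hn m hm heq
    by_contra hne
    rcases Nat.lt_or_ge n m with hlt | hge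
    · have hmod : n ≡ m [MOD e] := (ZMod.natCast_eq_natCast_iff _ _ _).1 heq
      obtain ⟨t, ht⟩ := (Nat.modEq_iff_dvd' (le_of_lt hlt)).1 hmod
      have htH : e * t ∈ nsH l a := by
        have := AddSubmonoid.nsmul_mem _ he t
        rwa [smul_eq_mul, mul_comm] at this
      have := hm.2 n hn.1 (e * t) htH (by omega)
      omega
    · have hlt : m < n := by omega
      have hmod : m ≡ n [MOD e] := ((ZMod.natCast_eq_natCast_iff _ _ _).1 heq).symm
      obtain ⟨t, ht⟩ := (Nat.modEq_iff_dvd' (le_of_lt hlt)).1 hmod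
      have htH : e * t ∈ nsH l a := by
        have := AddSubmonoid.nsmul_mem _ he t
        rwa [smul_eq_mul, mul_comm] at this
      have := hn.2 m hm.1 (e * t) htH (by omega)
      omega
  exact Set.Finite.of_finite_image (Set.toFinite _) this

end Aux3

section Aux4
variable {k : Type*} [Field k] {l : ℕ} {a : Fin l → ℕ}

lemma supp_spanMono {Λ : Set ℕ} {y : PowerSeries k} (hy : y ∈ spanMono k l a Λ)
    {n : ℕ} (hc : coeff n y ≠ 0) : n ∈ eSet k l a (spanMono k l a Λ) := by
  obtain ⟨m, hm, h, hh, rfl⟩ := coeff_spanMono hy hc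
  exact eSet_add_mem (Submodule.subset_span ⟨m, hm, rfl⟩) hh

lemma coeff_gmin_smul {Λ : Set ℕ} {g' : ℕ}
    (hg' : g' ∈ gmin l a (eSet k l a (spanMono k l a Λ)))
    (r : nsRing k l a) {y : PowerSeries k} (hy : y ∈ spanMono k l a Λ) :
    coeff g' (r • y) = coeff 0 (r : PowerSeries k) * coeff g' y := by
  rw [smul_def', coeff_mul, Finset.sum_eq_single ((0 : ℕ), g')]
  · intro p hp hne
    rw [Finset.HasAntidiagonal.mem_antidiagonal] at hp
    by_cases h1 : coeff p.1 (r : PowerSeries k) = 0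
    · rw [h1, zero_mul]
    · by_cases h2 : coeff p.2 y = 0
      · rw [h2, mul_zero]
      · exfalso
        have hpH : p.1 ∈ nsH l a := by
          by_contra hnH; exact h1 (coeff_eq_zero_of_not_mem r.2 hnH)
        have hqE := supp_spanMono hy h2
        have := hg'.2 p.2 hqE p.1 hpH (by omega)
        apply hne
        have : p.1 = 0 := this
        ext
        · exact this
        · omega
  · intro hmem
    exact absurd (Finset.HasAntidiagonal.mem_antidiagonal.2 (by omega)) hmem

lemma card_le_of_span {Λ : Set ℕ} (hfin : (gmin l a (eSet k l a (spanMono k l a Λ))).Finite)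
    (s : Finset (PowerSeries k))
    (hs : Submodule.span (nsRing k l a) (s : Set (PowerSeries k)) = spanMono k l a Λ) :
    hfin.toFinset.card ≤ s.card := by
  classical
  set G := hfin.toFinset with hG
  set v : PowerSeries k → (↥(G : Finset ℕ) → k) := fun y g => coeff (g : ℕ) y with hv
  have hsingle : ∀ g : ↥(G : Finset ℕ), Pi.single g (1 : k) ∈
      Submodule.span k ((s.image v : Finset (↥(G : Finset ℕ) → k)) : Set (↥(G : Finset ℕ) → k)) := by
    intro g
    have hgE : (g : ℕ) ∈ gmin l a (eSet k l a (spanMono k l a Λ)) := by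
      exact hfin.mem_toFinset.mp g.2
    have hXg : (X : PowerSeries k) ^ (g : ℕ) ∈ Submodule.span (nsRing k l a) (s : Set (PowerSeries k)) := by
      rw [hs]; exact hgE.1
    obtain ⟨f, -, hf⟩ := Submodule.mem_span_finset.1 hXg
    have key : Pi.single g (1 : k) = ∑ i ∈ s, (coeff 0 ((f i : PowerSeries k))) • v i := by
      funext g'
      have h1 : ∀ i ∈ s, coeff (g' : ℕ) (f i • i) =
          coeff 0 ((f i : PowerSeries k)) * coeff (g' : ℕ) i := by
        intro i hi
        have hgE' : (g' : ℕ) ∈ gmin l a (eSet k l a (spanMono k l a Λ)) := by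
          exact hfin.mem_toFinset.mp g'.2
        refine coeff_gmin_smul hgE' (f i) ?_
        rw [← hs]; exact Submodule.subset_span hi
      have h2 : coeff (g' : ℕ) ((X : PowerSeries k) ^ (g : ℕ)) =
          ∑ i ∈ s, coeff 0 ((f i : PowerSeries k)) * coeff (g' : ℕ) i := by
        rw [← hf, map_sum]
        exact Finset.sum_congr rfl h1
      rw [Finset.sum_apply]
      simp only [Pi.smul_apply, smul_eq_mul]
      rw [hv]
      simp only []
      rw [← h2, coeff_X_pow, Pi.single_apply]
      congr 1
      exact propext Subtype.ext_iff
    rw [key]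
    refine Submodule.sum_mem _ fun i hi => Submodule.smul_mem _ _ ?_
    exact Submodule.subset_span (Finset.mem_coe.2 (Finset.mem_image_of_mem v hi))
  have hspan : Submodule.span k ((s.image v : Finset (↥(G : Finset ℕ) → k)) : Set (↥(G : Finset ℕ) → k)) = ⊤ := by
    rw [eq_top_iff, ← (Pi.basisFun k ↥(G : Finset ℕ)).span_eq, Submodule.span_le]
    rintro x ⟨g, rfl⟩
    rw [Pi.basisFun_apply]
    exact hsingle g
  have h1 : G.card = Module.finrank k (↥(G : Finset ℕ) → k) := by
    rw [Module.finrank_fintype_fun_eq_card, Fintype.card_coe]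
  have h2 : Module.finrank k (↥(G : Finset ℕ) → k) ≤ (s.image v).card := by
    calc Module.finrank k (↥(G : Finset ℕ) → k)
        = Module.finrank k (⊤ : Submodule k (↥(G : Finset ℕ) → k)) := (finrank_top _ _).symm
      _ = Module.finrank k (Submodule.span k ((s.image v : Finset (↥(G : Finset ℕ) → k)) : Set (↥(G : Finset ℕ) → k))) := by rw [hspan]
      _ ≤ (s.image v).card := finrank_span_finset_le_card _
  calc G.card ≤ (s.image v).card := by omega
    _ ≤ s.card := Finset.card_image_le

end Aux4

section Aux5
variable {k : Type*} [Field k] {l : ℕ} {a : Fin l → ℕ}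

lemma X_pow_injective : Function.Injective (fun n : ℕ => (X : PowerSeries k) ^ n) := by
  intro n m h
  have := congrArg (coeff n) h
  rw [coeff_X_pow, coeff_X_pow, if_pos rfl] at this
  by_contra hne
  rw [if_neg hne] at this
  exact one_ne_zero this

lemma spanMono_gmin (Λ : Set ℕ) :
    spanMono k l a (gmin l a (eSet k l a (spanMono k l a Λ))) = spanMono k l a Λ := by
  apply le_antisymm
  · rw [spanMono, Submodule.span_le]
    rintro x ⟨n, hn, rfl⟩
    exact hn.1
  · rw [spanMono, Submodule.span_le]
    rintro x ⟨n, hn, rfl⟩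
    have hnE : n ∈ eSet k l a (spanMono k l a Λ) := Submodule.subset_span ⟨n, hn, rfl⟩
    obtain ⟨g, hg, h, hh, rfl⟩ := exists_gmin (fun n hn h hh => eSet_add_mem hn hh) hnE
    exact pow_mem_spanMono hg hh

lemma minGen_spanMono (Λ : Set ℕ)
    (hfin : (gmin l a (eSet k l a (spanMono k l a Λ))).Finite) :
    minGen (nsRing k l a) (spanMono k l a Λ) = hfin.toFinset.card := by
  classical
  have hwitness : ∃ s : Finset (PowerSeries k), s.card = hfin.toFinset.card ∧
      Submodule.span (nsRing k l a) (s : Set (PowerSeries k)) = spanMono k l a Λ := by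
    refine ⟨hfin.toFinset.image (fun n => (X : PowerSeries k) ^ n), ?_, ?_⟩
    · exact Finset.card_image_of_injective _ X_pow_injective
    · rw [Finset.coe_image, Set.Finite.coe_toFinset]
      exact spanMono_gmin Λ
  have hub : ∀ n ∈ {n | ∃ s : Finset (PowerSeries k), s.card = n ∧
      Submodule.span (nsRing k l a) (s : Set (PowerSeries k)) = spanMono k l a Λ},
      hfin.toFinset.card ≤ n := by
    rintro n ⟨s, rfl, hs⟩
    exact card_le_of_span hfin s hs
  apply le_antisymm
  · apply Nat.sInf_le
    obtain ⟨s, h1, h2⟩ := hwitness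
    exact ⟨s, h1, h2⟩
  · refine hub _ (Nat.sInf_mem ?_)
    obtain ⟨s, h1, h2⟩ := hwitness
    exact ⟨_, s, h1, h2⟩

end Aux5

section Aux6
variable {l : ℕ} {a : Fin l → ℕ}

lemma mul_mem_nsH {h : ℕ} (hh : h ∈ nsH l a) (t : ℕ) : t * h ∈ nsH l a := by
  have := AddSubmonoid.nsmul_mem _ hh t
  rwa [smul_eq_mul] at this

lemma bezout_pair (s : Finset (Fin l)) :
    ∃ p q : ℕ, p ∈ nsH l a ∧ q ∈ nsH l a ∧ (p : ℤ) - q = ((s.gcd a : ℕ) : ℤ) := by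
  classical
  induction s using Finset.induction_on with
  | empty => exact ⟨0, 0, zero_mem _, zero_mem _, by simp⟩
  | @insert i s hi ih =>
      obtain ⟨p, q, hp, hq, hpq⟩ := ih
      rw [Finset.gcd_insert]
      set g : ℕ := s.gcd a with hg
      set x := Nat.gcdA (a i) g with hx
      set y := Nat.gcdB (a i) g with hy
      have hbez : ((Nat.gcd (a i) g : ℕ) : ℤ) = (a i) * x + g * y := Nat.gcd_eq_gcd_ab _ _
      have haiH : a i ∈ nsH l a := AddSubmonoid.subset_closure ⟨i, rfl⟩
      refine ⟨x.toNat * a i + y.toNat * p + (-y).toNat * q,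
              (-x).toNat * a i + (-y).toNat * p + y.toNat * q,
              add_mem (add_mem (mul_mem_nsH haiH _) (mul_mem_nsH hp _)) (mul_mem_nsH hq _),
              add_mem (add_mem (mul_mem_nsH haiH _) (mul_mem_nsH hp _)) (mul_mem_nsH hq _), ?_⟩
      have hxx : (x.toNat : ℤ) - ((-x).toNat : ℤ) = x := by omega
      have hyy : (y.toNat : ℤ) - ((-y).toNat : ℤ) = y := by omega
      show _ = ((Nat.gcd (a i) g : ℕ) : ℤ)
      push_cast
      rw [hbez, ← hpq]
      nlinarith [hxx, hyy]

lemma conductor_set_nonempty (hgcd : Finset.univ.gcd a = 1) :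
    {c : ℕ | ∀ n : ℕ, c ≤ n → n ∈ nsH l a}.Nonempty := by
  obtain ⟨p, q, hp, hq, hpq⟩ := bezout_pair (a := a) Finset.univ
  rw [hgcd] at hpq
  have hpq' : p = q + 1 := by omega
  rcases Nat.eq_zero_or_pos q with hq0 | hqpos
  · subst hq0
    refine ⟨0, fun n _ => ?_⟩
    have h1 : n * p ∈ nsH l a := mul_mem_nsH hp n
    have h2 : n * p = n := by rw [hpq']; ring
    rwa [h2] at h1
  · refine ⟨q * q, fun n hn => ?_⟩
    have hmod := Nat.div_add_mod n q
    set r := n % q with hr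
    set s := n / q with hs
    have hrq : r < q := Nat.mod_lt _ hqpos
    have hsq : q ≤ s := by
      rw [hs]
      exact Nat.le_div_iff_mul_le hqpos |>.2 (by nlinarith)
    have hdecomp : n = (s - r) * q + r * p := by
      rw [hpq']
      have h1 : q * s + r = n := hmod
      have h2 : r ≤ s := le_trans (le_of_lt hrq) hsq
      have h3 : s - r + r = s := Nat.sub_add_cancel h2
      nlinarith [h3]
    rw [hdecomp]
    exact add_mem (mul_mem_nsH hq _) (mul_mem_nsH hp _)

lemma H_elt_bound (hl : 0 < l) (hmono : StrictMono a) {h : ℕ} (hh : h ∈ nsH l a) :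
    h = 0 ∨ a ⟨0, hl⟩ ≤ h := by
  induction hh using AddSubmonoid.closure_induction with
  | mem x hx =>
      obtain ⟨i, rfl⟩ := hx
      right
      exact hmono.monotone (by simp [Fin.le_def])
  | zero => left; rfl
  | add x y hx hy ihx ihy =>
      rcases ihx with h1 | h1
      · rcases ihy with h2 | h2
        · left; omega
        · right; omega
      · right; omega

lemma one_not_H (hl : 0 < l) (hmono : StrictMono a) (he2 : 2 ≤ a ⟨0, hl⟩) : 1 ∉ nsH l a := by
  intro h
  rcases H_elt_bound hl hmono h with h1 | h1 <;> omega

lemma cond_ge_two (hl : 0 < l) (hmono : StrictMono a) (hgcd : Finset.univ.gcd a = 1)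
    (he2 : 2 ≤ a ⟨0, hl⟩) : 2 ≤ nsCond l a := by
  by_contra hc
  push_neg at hc
  have hmem : nsCond l a ∈ {c : ℕ | ∀ n : ℕ, c ≤ n → n ∈ nsH l a} :=
    Nat.sInf_mem (conductor_set_nonempty hgcd)
  exact one_not_H hl hmono he2 (hmem 1 (by omega))

lemma frob_succ_mem (hl : 0 < l) (hmono : StrictMono a) (hgcd : Finset.univ.gcd a = 1)
    (he2 : 2 ≤ a ⟨0, hl⟩) {n : ℕ} (hn : nsFrob l a < n) : n ∈ nsH l a := by
  have hmem : nsCond l a ∈ {c : ℕ | ∀ n : ℕ, c ≤ n → n ∈ nsH l a} :=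
    Nat.sInf_mem (conductor_set_nonempty hgcd)
  have h2 := cond_ge_two hl hmono hgcd he2
  exact hmem n (by unfold nsFrob at hn; omega)

lemma frob_not_mem (hl : 0 < l) (hmono : StrictMono a) (hgcd : Finset.univ.gcd a = 1)
    (he2 : 2 ≤ a ⟨0, hl⟩) : nsFrob l a ∉ nsH l a := by
  intro hF
  have h2 := cond_ge_two hl hmono hgcd he2
  have hset : nsFrob l a ∈ {c : ℕ | ∀ n : ℕ, c ≤ n → n ∈ nsH l a} := by
    intro n hn
    rcases eq_or_lt_of_le hn with rfl | hlt
    · exact hF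
    · exact frob_succ_mem hl hmono hgcd he2 hlt
  have hle := Nat.sInf_le hset
  have hc : nsCond l a = sInf {c : ℕ | ∀ n : ℕ, c ≤ n → n ∈ nsH l a} := rfl
  unfold nsFrob at hle
  omega

lemma not_H_le_frob (hl : 0 < l) (hmono : StrictMono a) (hgcd : Finset.univ.gcd a = 1)
    (he2 : 2 ≤ a ⟨0, hl⟩) {n : ℕ} (hn : n ∉ nsH l a) : n ≤ nsFrob l a := by
  by_contra hc
  exact hn (frob_succ_mem hl hmono hgcd he2 (by omega))

end Aux6

/-- exponent set of the canonical module -/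
def nsOm (l : ℕ) (a : Fin l → ℕ) : Set ℕ :=
  {m | ¬∃ h ∈ nsH l a, (h : ℤ) = (nsFrob l a : ℤ) - m}

section Aux7
variable {k : Type*} [Field k] {l : ℕ} {a : Fin l → ℕ}

lemma Om_closed {m h : ℕ} (hm : m ∈ nsOm l a) (hh : h ∈ nsH l a) : m + h ∈ nsOm l a := by
  rintro ⟨h', hh', heq⟩
  exact hm ⟨h' + h, add_mem hh' hh, by push_cast; omega⟩

lemma H_sub_Om (hl : 0 < l) (hmono : StrictMono a) (hgcd : Finset.univ.gcd a = 1)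
    (he2 : 2 ≤ a ⟨0, hl⟩) {h : ℕ} (hh : h ∈ nsH l a) : h ∈ nsOm l a := by
  have h0 : (0 : ℕ) ∈ nsOm l a := by
    rintro ⟨h', hh', heq⟩
    have : h' = nsFrob l a := by omega
    exact frob_not_mem hl hmono hgcd he2 (this ▸ hh')
  have := Om_closed h0 hh
  rwa [zero_add] at this

lemma zero_mem_Om (hl : 0 < l) (hmono : StrictMono a) (hgcd : Finset.univ.gcd a = 1)
    (he2 : 2 ≤ a ⟨0, hl⟩) : (0 : ℕ) ∈ nsOm l a :=
  H_sub_Om hl hmono hgcd he2 (zero_mem _)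

lemma frob_not_Om : nsFrob l a ∉ nsOm l a := fun hc =>
  hc ⟨0, zero_mem _, by push_cast; ring⟩

lemma nsCanon_eq_spanMono : nsCanon k l a = spanMono k l a (nsOm l a) := by
  unfold nsCanon spanMono
  congr 1
  ext x
  constructor
  · rintro ⟨m, hm, rfl⟩; exact ⟨m, hm, rfl⟩
  · rintro ⟨m, hm, rfl⟩; exact ⟨m, hm, rfl⟩

lemma eSet_spanMono_closed {E : Set ℕ} (hcl : ∀ n ∈ E, ∀ h ∈ nsH l a, n + h ∈ E) :
    eSet k l a (spanMono k l a E) = E := by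
  rw [eSet_spanMono]
  ext n
  constructor
  · rintro ⟨m, hm, h, hh, rfl⟩; exact hcl m hm h hh
  · intro hn; exact ⟨n, hn, 0, zero_mem _, by omega⟩

lemma spanMono_mul {U W : Set ℕ} :
    spanMono k l a U * spanMono k l a W = spanMono k l a (Set.image2 (· + ·) U W) := by
  unfold spanMono
  rw [Submodule.span_mul_span]
  congr 1
  ext x
  constructor
  · rintro ⟨y, ⟨m, hm, rfl⟩, z, ⟨n, hn, rfl⟩, rfl⟩
    exact ⟨m + n, Set.mem_image2_of_mem hm hn, pow_add _ _ _⟩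
  · rintro ⟨mn, ⟨m, hm, n, hn, rfl⟩, rfl⟩
    exact ⟨X ^ m, ⟨m, hm, rfl⟩, X ^ n, ⟨n, hn, rfl⟩, (pow_add _ _ _).symm⟩

end Aux7

section Aux8
variable {k : Type*} [Field k] {l : ℕ} {a : Fin l → ℕ}

lemma mem_colonSub {M N : Submodule (nsRing k l a) (PowerSeries k)} {x : PowerSeries k} :
    x ∈ colonSub M N ↔ ∀ y ∈ N, x * y ∈ M := Iff.rfl

lemma one_mem_spanMono_pair {b : ℕ} : (1 : PowerSeries k) ∈ spanMono k l a ({0, b} : Set ℕ) :=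
  Submodule.subset_span ⟨0, Set.mem_insert _ _, pow_zero X⟩

lemma Xb_mem_spanMono_pair {b : ℕ} : (X : PowerSeries k) ^ b ∈ spanMono k l a ({0, b} : Set ℕ) :=
  Submodule.subset_span ⟨b, Set.mem_insert_iff.2 (Or.inr rfl), rfl⟩

lemma colonSub_canon {b : ℕ} :
    colonSub (nsCanon k l a) (spanMono k l a ({0, b} : Set ℕ))
      = spanMono k l a {n | n ∈ nsOm l a ∧ n + b ∈ nsOm l a} := by
  have hOmE : eSet k l a (spanMono k l a (nsOm l a)) = nsOm l a :=
    eSet_spanMono_closed (fun n hn h hh => Om_closed hn hh)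
  apply le_antisymm
  · intro x hx
    rw [mem_colonSub] at hx
    have hx1 : x ∈ spanMono k l a (nsOm l a) := by
      have := hx 1 one_mem_spanMono_pair
      rw [mul_one, nsCanon_eq_spanMono] at this
      exact this
    have hxb : x * (X : PowerSeries k) ^ b ∈ spanMono k l a (nsOm l a) := by
      have := hx _ Xb_mem_spanMono_pair
      rwa [nsCanon_eq_spanMono] at this
    obtain ⟨N, hN⟩ := bound_spanMono hx1
    refine mem_spanMono_of_supp hN (fun n hc => ?_)
    constructor
    · rw [← hOmE]; exact supp_spanMono hx1 hc
    · rw [← hOmE]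
      refine supp_spanMono hxb (n := n + b) ?_
      rwa [PowerSeries.coeff_mul_X_pow]
    
  · rw [spanMono, Submodule.span_le]
    rintro z ⟨n, ⟨hn1, hn2⟩, rfl⟩
    rw [SetLike.mem_coe, mem_colonSub]
    intro y hy
    rw [nsCanon_eq_spanMono]
    induction hy using Submodule.span_induction with
    | mem w hw =>
        obtain ⟨m, hm, rfl⟩ := hw
        rcases hm with rfl | rfl
        · show (X:PowerSeries k) ^ n * (X:PowerSeries k) ^ 0 ∈ _
          rw [pow_zero, mul_one]
          rw [← hOmE] at hn1
          exact hn1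
        · rw [← pow_add]
          rw [← hOmE] at hn2
          exact hn2
    | zero => rw [mul_zero]; exact zero_mem _
    | add y1 y2 hy1 hy2 ih1 ih2 => rw [mul_add]; exact add_mem ih1 ih2
    | smul r y hy ih =>
        rw [smul_def', mul_left_comm]
        have : (r : PowerSeries k) * ((X:PowerSeries k) ^ n * y)
            = r • ((X:PowerSeries k) ^ n * y) := (smul_def' _ _).symm
        rw [this]
        exact Submodule.smul_mem _ _ ih

end Aux8

lemma zmod_final : ∀ e : ℕ, 2 ≤ e → e < 8 → ∀ β δ : ZMod e,
    ¬(β ≠ 0 ∧ δ ≠ 0 ∧ β + δ ≠ 0 ∧ β ≠ δ ∧ 2*β ≠ 0 ∧ 2*δ ≠ 0 ∧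
      2*β ≠ δ ∧ 2*δ ≠ β ∧ 2*β + δ ≠ 0 ∧ β + 2*δ ≠ 0) := by
  intro e h2 h8
  interval_cases e <;> decide

lemma cast_eq_cases {e x y : ℕ} (h : (x : ZMod e) = (y : ZMod e)) :
    (∃ t, y = x + e * t) ∨ (∃ t, x = y + e * t) := by
  have hmod : x ≡ y [MOD e] := (ZMod.natCast_eq_natCast_iff _ _ _).1 h
  rcases le_total x y with hle | hle
  · obtain ⟨t, ht⟩ := (Nat.modEq_iff_dvd' hle).1 hmod
    exact Or.inl ⟨t, by omega⟩
  · obtain ⟨t, ht⟩ := (Nat.modEq_iff_dvd' hle).1 hmod.symm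
    exact Or.inr ⟨t, by omega⟩


/-- (Proposition 5.3) Let `I` be a monomial ideal with `R ⊆ I ⊆ V` and
`J = K_R : I`. If `μ_R(I) = μ_R(J) = 2`, `IJ = K_R` and `μ_R(K_R) = 4`, then
`e = a_1 ≥ 8`. -/
theorem stmt16 (k : Type*) [Field k] (l : ℕ) (hl : 0 < l) (a : Fin l → ℕ)
    (hpos : 0 < a ⟨0, hl⟩) (hmono : StrictMono a) (hgcd : Finset.univ.gcd a = 1)
    (he2 : 2 ≤ a ⟨0, hl⟩)
    (I : Submodule (nsRing k l a) (PowerSeries k)) (hmon : IsMonomialSub k l a I)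
    (h1 : (1 : PowerSeries k) ∈ I)
    (hmuI : minGen (nsRing k l a) I = 2)
    (hmuJ : minGen (nsRing k l a) (colonSub (nsCanon k l a) I) = 2)
    (hIJ : I * colonSub (nsCanon k l a) I = nsCanon k l a)
    (hmuK : minGen (nsRing k l a) (nsCanon k l a) = 4) :
    8 ≤ a ⟨0, hl⟩ := by
  classical
  by_contra hlt
  push_neg at hlt
  set e := a ⟨0, hl⟩ with he
  have heH : e ∈ nsH l a := AddSubmonoid.subset_closure ⟨⟨0, hl⟩, rfl⟩
  have he0 : e ≠ 0 := by omega
  have hetH : ∀ t : ℕ, e * t ∈ nsH l a := fun t => by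
    have := mul_mem_nsH heH t; rwa [mul_comm] at this
  -- basic Om facts
  have h0O : (0:ℕ) ∈ nsOm l a := zero_mem_Om hl hmono hgcd he2
  have hHO : ∀ {h : ℕ}, h ∈ nsH l a → h ∈ nsOm l a := fun hh => H_sub_Om hl hmono hgcd he2 hh
  -- Step 1 : I = spanMono {0, b}
  obtain ⟨Λ, hIΛ0⟩ := hmon
  have hIΛ : I = spanMono k l a Λ := hIΛ0
  have hfinI : (gmin l a (eSet k l a (spanMono k l a Λ))).Finite := gmin_finite heH he0 _
  rw [hIΛ] at hmuI h1 hmuJ hIJ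
  have hcardI : hfinI.toFinset.card = 2 := by
    rw [← minGen_spanMono Λ hfinI]; exact hmuI
  have h0I : (0:ℕ) ∈ hfinI.toFinset := by
    rw [Set.Finite.mem_toFinset]
    refine ⟨?_, fun m hm h hh heq => by omega⟩
    show (X : PowerSeries k) ^ 0 ∈ spanMono k l a Λ
    rw [pow_zero]; exact h1
  obtain ⟨x, y, hxy, hsetI⟩ := Finset.card_eq_two.1 hcardI
  have hbex : ∃ b, b ≠ 0 ∧ hfinI.toFinset = {0, b} := by
    rw [hsetI] at h0I
    rcases Finset.mem_insert.1 h0I with rfl | h0y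
    · exact ⟨y, fun h => hxy h.symm, by rw [hsetI]⟩
    · rw [Finset.mem_singleton] at h0y
      subst h0y
      exact ⟨x, fun h => hxy h, by rw [hsetI, Finset.pair_comm]⟩
  obtain ⟨b, hb0, hsetIb⟩ := hbex
  have hgminI : gmin l a (eSet k l a (spanMono k l a Λ)) = ({0, b} : Set ℕ) := by
    rw [← hfinI.coe_toFinset, hsetIb]; simp
  have hIpair : spanMono k l a Λ = spanMono k l a ({0, b} : Set ℕ) := by
    rw [← spanMono_gmin Λ, hgminI]
  -- Step 2 : J = spanMono EJ
  set EJ : Set ℕ := {n | n ∈ nsOm l a ∧ n + b ∈ nsOm l a} with hEJ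
  have hJeq : colonSub (nsCanon k l a) (spanMono k l a Λ) = spanMono k l a EJ := by
    rw [hIpair]; exact colonSub_canon
  have hEJcl : ∀ n ∈ EJ, ∀ h ∈ nsH l a, n + h ∈ EJ := by
    rintro n ⟨hn1, hn2⟩ h hh
    exact ⟨Om_closed hn1 hh, by rw [show n + h + b = n + b + h by omega]; exact Om_closed hn2 hh⟩
  have hEJE : eSet k l a (spanMono k l a EJ) = EJ := eSet_spanMono_closed hEJcl
  rw [hJeq] at hmuJ hIJ
  have hfinJ : (gmin l a (eSet k l a (spanMono k l a EJ))).Finite := gmin_finite heH he0 _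
  have hcardJ : hfinJ.toFinset.card = 2 := by
    rw [← minGen_spanMono EJ hfinJ]; exact hmuJ
  obtain ⟨c, d', hcd', hsetJ⟩ := Finset.card_eq_two.1 hcardJ
  have hgminJ : gmin l a (eSet k l a (spanMono k l a EJ)) = ({c, d'} : Set ℕ) := by
    rw [← hfinJ.coe_toFinset, hsetJ]; simp
  have hJpair : spanMono k l a EJ = spanMono k l a ({c, d'} : Set ℕ) := by
    rw [← spanMono_gmin EJ, hgminJ]
  -- Step 3 : Om = quad + H
  have hOmcl : ∀ n ∈ nsOm l a, ∀ h ∈ nsH l a, n + h ∈ nsOm l a := fun n hn h hh => Om_closed hn hh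
  have hOmE : eSet k l a (spanMono k l a (nsOm l a)) = nsOm l a := eSet_spanMono_closed hOmcl
  have hKspan : spanMono k l a (Set.image2 (· + ·) ({0, b} : Set ℕ) ({c, d'} : Set ℕ))
      = spanMono k l a (nsOm l a) := by
    rw [← spanMono_mul, ← hIpair, ← hJpair, hIJ, nsCanon_eq_spanMono]
  have hfinK : (gmin l a (eSet k l a (spanMono k l a (nsOm l a)))).Finite := gmin_finite heH he0 _
  have hcardK : hfinK.toFinset.card = 4 := by
    rw [← minGen_spanMono (nsOm l a) hfinK, ← nsCanon_eq_spanMono]; exact hmuK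
  have himg : Set.image2 (· + ·) ({0, b} : Set ℕ) ({c, d'} : Set ℕ)
      = (↑({c, d', b + c, b + d'} : Finset ℕ) : Set ℕ) := by
    ext n
    simp only [Set.mem_image2, Set.mem_insert_iff, Set.mem_singleton_iff,
      Finset.coe_insert, Finset.coe_singleton, Finset.mem_coe, Finset.mem_insert,
      Finset.mem_singleton]
    constructor
    · rintro ⟨u, hu, w, hw, rfl⟩
      rcases hu with rfl | rfl <;> rcases hw with rfl | rfl <;> omega
    · rintro (h | h | h | h)
      · exact ⟨0, Or.inl rfl, c, Or.inl rfl, by omega⟩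
      · exact ⟨0, Or.inl rfl, d', Or.inr rfl, by omega⟩
      · exact ⟨b, Or.inr rfl, c, Or.inl rfl, by omega⟩
      · exact ⟨b, Or.inr rfl, d', Or.inr rfl, by omega⟩
  have hsubK : hfinK.toFinset ⊆ ({c, d', b + c, b + d'} : Finset ℕ) := by
    intro n hn
    rw [Set.Finite.mem_toFinset] at hn
    have h2 : gmin l a (eSet k l a (spanMono k l a (nsOm l a)))
        ⊆ Set.image2 (· + ·) ({0, b} : Set ℕ) ({c, d'} : Set ℕ) := by
      have h3 := gmin_spanMono_subset (k := k) (l := l) (a := a)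
        (Λ := Set.image2 (· + ·) ({0, b} : Set ℕ) ({c, d'} : Set ℕ))
      rw [hKspan] at h3
      exact h3
    have := h2 hn
    rw [himg] at this
    exact this
  have hquad : ({c, d', b + c, b + d'} : Finset ℕ) = hfinK.toFinset := by
    refine (Finset.eq_of_subset_of_card_le hsubK ?_).symm
    rw [hcardK]
    calc ({c, d', b + c, b + d'} : Finset ℕ).card
        ≤ ({d', b + c, b + d'} : Finset ℕ).card + 1 := Finset.card_insert_le _ _
      _ ≤ (({b + c, b + d'} : Finset ℕ).card + 1) + 1 := by
          have := Finset.card_insert_le d' ({b + c, b + d'} : Finset ℕ); omega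
      _ ≤ 4 := by
          have := Finset.card_insert_le (b + c) ({b + d'} : Finset ℕ)
          have h2 := Finset.card_singleton (b + d')
          omega
  -- 0 is a minimal generator of Om
  have h0K : (0:ℕ) ∈ hfinK.toFinset := by
    rw [Set.Finite.mem_toFinset, hOmE]
    exact ⟨h0O, fun m hm h hh heq => by omega⟩
  have h0quad : 0 = c ∨ 0 = d' := by
    rw [← hquad] at h0K
    simp only [Finset.mem_insert, Finset.mem_singleton] at h0K
    rcases h0K with h | h | h | h
    · exact Or.inl h
    · exact Or.inr h
    · omega
    · omega
  -- normalize so that c = 0, d = the other generator of J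
  have hmain : ∃ d, d ≠ 0 ∧
      gmin l a (eSet k l a (spanMono k l a EJ)) = ({0, d} : Set ℕ) ∧
      ({(0:ℕ), d, b, b + d} : Finset ℕ) = hfinK.toFinset := by
    rcases h0quad with h | h
    · refine ⟨d', fun hh => hcd' (by omega), by rw [hgminJ, ← h], ?_⟩
      rw [← hquad, ← h]
      ext z; simp only [Finset.mem_insert, Finset.mem_singleton]; omega
    · refine ⟨c, fun hh => hcd' (by omega), ?_, ?_⟩
      · rw [hgminJ, ← h, Set.pair_comm]
      · rw [← hquad, ← h]
        ext z; simp only [Finset.mem_insert, Finset.mem_singleton]; omega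
  obtain ⟨d, hd0, hgminJ', hquad'⟩ := hmain
  -- memberships and minimality in Om
  have hmemK : ∀ n ∈ ({(0:ℕ), d, b, b + d} : Finset ℕ), n ∈ gmin l a (nsOm l a) := by
    intro n hn
    rw [hquad', Set.Finite.mem_toFinset, hOmE] at hn
    exact hn
  have hbg : b ∈ gmin l a (nsOm l a) := hmemK b (by simp)
  have hdg : d ∈ gmin l a (nsOm l a) := hmemK d (by simp)
  have hbdg : b + d ∈ gmin l a (nsOm l a) := hmemK (b + d) (by simp)
  have hbO : b ∈ nsOm l a := hbg.1
  have hdO : d ∈ nsOm l a := hdg.1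
  have hbdO : b + d ∈ nsOm l a := hbdg.1
  have hbmin := hbg.2
  have hdmin := hdg.2
  have hbdmin := hbdg.2
  -- b ≠ d
  have hbd : b ≠ d := by
    intro hbd
    subst hbd
    have h4 : ({(0:ℕ), b, b, b + b} : Finset ℕ).card = 4 := by rw [hquad']; exact hcardK
    have hsub3 : ({(0:ℕ), b, b, b + b} : Finset ℕ) ⊆ ({0, b, b + b} : Finset ℕ) := by
      intro z; simp only [Finset.mem_insert, Finset.mem_singleton]; tauto
    have h5 := Finset.card_le_card hsub3
    have h6 : ({(0:ℕ), b, b + b} : Finset ℕ).card ≤ 3 := by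
      have := Finset.card_insert_le (0:ℕ) ({b, b + b} : Finset ℕ)
      have h7 := Finset.card_insert_le b ({b + b} : Finset ℕ)
      have h8 := Finset.card_singleton (b + b)
      omega
    omega
  -- the key property (J) : n ∈ Om, n + b ∈ Om → n ∈ H ∪ (d + H)
  have hJ : ∀ n : ℕ, n ∈ nsOm l a → n + b ∈ nsOm l a →
      n ∈ nsH l a ∨ ∃ h ∈ nsH l a, n = d + h := by
    intro n hn1 hn2
    have hnE : n ∈ eSet k l a (spanMono k l a EJ) := by rw [hEJE]; exact ⟨hn1, hn2⟩
    obtain ⟨g, hg, h, hh, heq⟩ := exists_gmin (fun n hn h hh => by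
      rw [hEJE] at *; exact hEJcl n hn h hh) hnE
    rw [hgminJ'] at hg
    rcases hg with rfl | rfl
    · left; rw [heq, zero_add]; exact hh
    · right; exact ⟨h, hh, heq⟩
  -- Frobenius facts
  have hFO : nsFrob l a ∉ nsOm l a := frob_not_Om
  have hnotH_le : ∀ {n : ℕ}, n ∉ nsH l a → n ≤ nsFrob l a :=
    fun hn => not_H_le_frob hl hmono hgcd he2 hn
  -- dual property (J') : n ∈ Om, n + d ∈ Om → n ∈ H ∪ (b + H)
  have hJ' : ∀ n : ℕ, n ∈ nsOm l a → n + d ∈ nsOm l a →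
      n ∈ nsH l a ∨ ∃ h ∈ nsH l a, n = b + h := by
    intro n hn1 hn2
    by_cases hnH : n ∈ nsH l a
    · exact Or.inl hnH
    by_cases hnb : ∃ h ∈ nsH l a, n = b + h
    · exact Or.inr hnb
    exfalso
    have hnF : n ≤ nsFrob l a := hnotH_le hnH
    set F := nsFrob l a with hF
    set yy := F - n with hyy
    have hyO : yy ∈ nsOm l a := by
      rintro ⟨h, hH, heq⟩
      have : h = n := by omega
      exact hnH (this ▸ hH)
    have hybO : yy + b ∈ nsOm l a := by
      rintro ⟨h, hH, heq⟩
      exact hnb ⟨h, hH, by omega⟩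
    rcases hJ yy hyO hybO with hyH | ⟨h, hH, hyd⟩
    · exact hn1 ⟨yy, hyH, by omega⟩
    · exact hn2 ⟨h, hH, by omega⟩
  -- non-membership facts
  have hnbb : b + b ∉ nsOm l a := by
    intro hc
    rcases hJ b hbO hc with hbH | ⟨h, hH, heq⟩
    · exact hb0 (hbmin 0 h0O b hbH (by omega))
    · exact hbd (by have := hbmin d hdO h hH heq; omega)
  have hndd : d + d ∉ nsOm l a := by
    intro hc
    rcases hJ' d hdO hc with hdH | ⟨h, hH, heq⟩
    · exact hd0 (hdmin 0 h0O d hdH (by omega))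
    · exact hbd (by have := hdmin b hbO h hH heq; omega)
  have hnbbd : b + b + d ∉ nsOm l a := by
    intro hc
    have hc' : (b + d) + b ∈ nsOm l a := by rw [show b + d + b = b + b + d by omega]; exact hc
    rcases hJ (b + d) hbdO hc' with hH | ⟨h, hH, heq⟩
    · exact hb0 (by have := hbdmin 0 h0O (b + d) hH (by omega); omega)
    · have hhb : h = b := by omega
      exact hb0 (hbmin 0 h0O b (hhb ▸ hH) (by omega))
  have hnbdd : b + d + d ∉ nsOm l a := by
    intro hc
    rcases hJ' (b + d) hbdO hc with hH | ⟨h, hH, heq⟩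
    · exact hb0 (by have := hbdmin 0 h0O (b + d) hH (by omega); omega)
    · have hhd : h = d := by omega
      exact hd0 (hdmin 0 h0O d (hhd ▸ hH) (by omega))
  -- now the ZMod e contradictions
  refine zmod_final e he2 hlt (b : ZMod e) (d : ZMod e) ⟨?_, ?_, ?_, ?_, ?_, ?_, ?_, ?_, ?_, ?_⟩
  · -- β ≠ 0
    intro hcast
    rw [show (0 : ZMod e) = ((0:ℕ) : ZMod e) by norm_num] at hcast
    rcases cast_eq_cases hcast with ⟨t, ht⟩ | ⟨t, ht⟩
    · omega
    · have hbH : b ∈ nsH l a := by rw [ht, zero_add]; exact hetH t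
      exact hb0 (hbmin 0 h0O b hbH (by omega))
  · -- δ ≠ 0
    intro hcast
    rw [show (0 : ZMod e) = ((0:ℕ) : ZMod e) by norm_num] at hcast
    rcases cast_eq_cases hcast with ⟨t, ht⟩ | ⟨t, ht⟩
    · omega
    · have hdH : d ∈ nsH l a := by rw [ht, zero_add]; exact hetH t
      exact hd0 (hdmin 0 h0O d hdH (by omega))
  · -- β + δ ≠ 0
    intro hcast
    rw [show ((b : ZMod e) + d) = ((b + d : ℕ) : ZMod e) by push_cast; ring,
      show (0 : ZMod e) = ((0:ℕ) : ZMod e) by norm_num] at hcast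
    rcases cast_eq_cases hcast with ⟨t, ht⟩ | ⟨t, ht⟩
    · omega
    · have hH : b + d ∈ nsH l a := by rw [ht, zero_add]; exact hetH t
      exact hb0 (by have := hbdmin 0 h0O (b + d) hH (by omega); omega)
  · -- β ≠ δ
    intro hcast
    rcases cast_eq_cases hcast with ⟨t, ht⟩ | ⟨t, ht⟩
    · -- d = b + e t
      have := hdmin b hbO (e * t) (hetH t) ht
      omega
    · have := hbmin d hdO (e * t) (hetH t) ht
      omega
  · -- 2β ≠ 0
    intro hcast
    rw [show (2 * (b : ZMod e)) = ((b + b : ℕ) : ZMod e) by push_cast; ring,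
      show (0 : ZMod e) = ((0:ℕ) : ZMod e) by norm_num] at hcast
    rcases cast_eq_cases hcast with ⟨t, ht⟩ | ⟨t, ht⟩
    · omega
    · exact hnbb (by rw [ht, zero_add]; exact hHO (hetH t))
  · -- 2δ ≠ 0
    intro hcast
    rw [show (2 * (d : ZMod e)) = ((d + d : ℕ) : ZMod e) by push_cast; ring,
      show (0 : ZMod e) = ((0:ℕ) : ZMod e) by norm_num] at hcast
    rcases cast_eq_cases hcast with ⟨t, ht⟩ | ⟨t, ht⟩
    · omega
    · exact hndd (by rw [ht, zero_add]; exact hHO (hetH t))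
  · -- 2β ≠ δ
    intro hcast
    rw [show (2 * (b : ZMod e)) = ((b + b : ℕ) : ZMod e) by push_cast; ring] at hcast
    rcases cast_eq_cases hcast with ⟨t, ht⟩ | ⟨t, ht⟩
    · -- d = b + b + e t : apply (J) to n = b + e t
      have hnO : b + e * t ∈ nsOm l a := Om_closed hbO (hetH t)
      have hnbO : (b + e * t) + b ∈ nsOm l a := by
        rw [show (b + e * t) + b = d by omega]; exact hdO
      rcases hJ _ hnO hnbO with hH | ⟨h, hH, heq⟩
      · have := hdmin b hbO (b + e * t) hH (by omega)
        omega
      · omega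
    · -- b + b = d + e t : so b + b ∈ Om
      exact hnbb (by rw [ht]; exact Om_closed hdO (hetH t))
  · -- 2δ ≠ β
    intro hcast
    rw [show (2 * (d : ZMod e)) = ((d + d : ℕ) : ZMod e) by push_cast; ring] at hcast
    rcases cast_eq_cases hcast with ⟨t, ht⟩ | ⟨t, ht⟩
    · -- b = d + d + e t : apply (J') to n = d + e t
      have hnO : d + e * t ∈ nsOm l a := Om_closed hdO (hetH t)
      have hndO : (d + e * t) + d ∈ nsOm l a := by
        rw [show (d + e * t) + d = b by omega]; exact hbO
      rcases hJ' _ hnO hndO with hH | ⟨h, hH, heq⟩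
      · have := hbmin d hdO (d + e * t) hH (by omega)
        omega
      · omega
    · exact hndd (by rw [ht]; exact Om_closed hbO (hetH t))
  · -- 2β + δ ≠ 0
    intro hcast
    rw [show (2 * (b : ZMod e) + d) = ((b + b + d : ℕ) : ZMod e) by push_cast; ring,
      show (0 : ZMod e) = ((0:ℕ) : ZMod e) by norm_num] at hcast
    rcases cast_eq_cases hcast with ⟨t, ht⟩ | ⟨t, ht⟩
    · omega
    · exact hnbbd (by rw [ht, zero_add]; exact hHO (hetH t))
  · -- β + 2δ ≠ 0
    intro hcast
    rw [show ((b : ZMod e) + 2 * d) = ((b + d + d : ℕ) : ZMod e) by push_cast; ring,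
      show (0 : ZMod e) = ((0:ℕ) : ZMod e) by norm_num] at hcast
    rcases cast_eq_cases hcast with ⟨t, ht⟩ | ⟨t, ht⟩
    · omega
    · exact hnbdd (by rw [ht, zero_add]; exact hHO (hetH t))


end
end
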